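/- arXiv:2105.13063 — 3 statements merged into one kernel-verified Lean document; each statement's English description precedes it below -/
import Mathlib

section
/- The integral operator 𝒦 on L_p(𝔻) defined by 𝒦[φ](z) = (1/π)∫_𝔻 (1/(ζ−z) + z̄/(1−ζz̄)) φ(ζ) dμ(ζ) is a bounded linear operator from L_p(𝔻) to L_p(𝔻) for every p > 1. -/
open Complex Metric Set MeasureTheory ComplexConjugate Real
open scoped ENNReal NNReal

noncomputable section

/-- The open unit disk in `ℂ`. -/
def unitDisk : Set ℂ := Metric.ball 0 1

/-- The integral operator
`𝒦[φ](z) = (1/π) ∫_𝔻 (1/(ζ−z) + z̄/(1−ζz̄)) φ(ζ) dμ(ζ)` (μ planar Lebesgue measure). -/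
def greenOp (φ : ℂ → ℂ) (z : ℂ) : ℂ :=
  (1 / (Real.pi : ℂ)) *
    ∫ ζ in unitDisk, (1 / (ζ - z) + conj z / (1 - ζ * conj z)) * φ ζ

namespace GreenAux

open scoped ENNReal NNReal

/-- The kernel of the operator. -/
def Kk (z ζ : ℂ) : ℂ := 1 / (ζ - z) + conj z / (1 - ζ * conj z)

lemma measurable_Kk : Measurable fun pr : ℂ × ℂ => Kk pr.1 pr.2 := by
  unfold Kk
  have hconj : Measurable fun z : ℂ => (starRingEnd ℂ) z :=
    (RCLike.continuous_conj (K := ℂ)).measurable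
  fun_prop

/-- The basic singular-integral constant. -/
def C0 : ℝ≥0∞ := ∫⁻ u in Metric.ball (0:ℂ) 3, ENNReal.ofReal ‖u‖⁻¹

/-- The area of the unit disk. -/
def V : ℝ≥0∞ := volume unitDisk

lemma V_lt_top : V < ⊤ := by
  simpa [V, unitDisk] using measure_ball_lt_top (x := (0:ℂ)) (r := 1)

lemma C0_lt_top : C0 < ⊤ := by
  have hm : Measurable fun u : ℂ => ‖u‖⁻¹ := measurable_norm.inv
  have hmin : Measurable fun t : ℝ => (min t⁻¹ 3) ^ 2 :=
    ((measurable_id.inv).min measurable_const).pow_const 2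
  rw [C0, lintegral_eq_lintegral_meas_le _ (ae_of_all _ fun u => by positivity) hm.aemeasurable]
  have key : ∀ t ∈ Ioi (0:ℝ),
      (volume.restrict (Metric.ball (0:ℂ) 3)) {u : ℂ | t ≤ ‖u‖⁻¹}
        ≤ ENNReal.ofReal ((min t⁻¹ 3) ^ 2) * NNReal.pi := by
    intro t ht
    have ht : 0 < t := ht
    have hS : MeasurableSet {u : ℂ | t ≤ ‖u‖⁻¹} := measurableSet_le measurable_const hm
    rw [Measure.restrict_apply hS]
    have hsub : {u : ℂ | t ≤ ‖u‖⁻¹} ∩ Metric.ball (0:ℂ) 3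
        ⊆ Metric.closedBall (0:ℂ) (min t⁻¹ 3) := by
      intro u hu
      obtain ⟨hu1, hu2⟩ := hu
      simp only [mem_setOf_eq] at hu1
      have hu0 : 0 < ‖u‖⁻¹ := lt_of_lt_of_le ht hu1
      have hupos : 0 < ‖u‖ := inv_pos.mp hu0
      have h3 : ‖u‖ ≤ t⁻¹ := by
        rw [← inv_inv ‖u‖]
        exact inv_anti₀ ht hu1
      have h4 : ‖u‖ ≤ 3 := le_of_lt (by simpa [Metric.mem_ball, dist_eq_norm] using hu2)
      exact mem_closedBall_zero_iff.2 (le_min h3 h4)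
    refine le_trans (measure_mono hsub) (le_of_eq ?_)
    rw [Complex.volume_closedBall]
    congr 1
    rw [← ENNReal.ofReal_pow (by positivity)]
  calc ∫⁻ t in Ioi (0:ℝ), (volume.restrict (Metric.ball (0:ℂ) 3)) {u : ℂ | t ≤ ‖u‖⁻¹}
      ≤ ∫⁻ t in Ioi (0:ℝ), ENNReal.ofReal ((min t⁻¹ 3) ^ 2) * NNReal.pi :=
        setLIntegral_mono ((ENNReal.measurable_ofReal.comp hmin).mul_const _) key
    _ = (∫⁻ t in Ioi (0:ℝ), ENNReal.ofReal ((min t⁻¹ 3) ^ 2)) * NNReal.pi :=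
        lintegral_mul_const _ (ENNReal.measurable_ofReal.comp hmin)
    _ < ⊤ := by
        refine ENNReal.mul_lt_top ?_ (by simp)
        have hIoc : IntegrableOn (fun t : ℝ => (min t⁻¹ 3) ^ 2) (Ioc 0 3⁻¹) := by
          refine Measure.integrableOn_of_bounded (M := 9) (by simp) hmin.aestronglyMeasurable ?_
          refine (ae_restrict_iff' measurableSet_Ioc).2 (ae_of_all _ fun t htt => ?_)
          have htpos : 0 < t := htt.1
          have h0 : (0:ℝ) ≤ min t⁻¹ 3 := le_min (by positivity) (by norm_num)
          have h3 : min t⁻¹ 3 ≤ 3 := min_le_right _ _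
          rw [Real.norm_eq_abs, _root_.abs_of_nonneg (sq_nonneg _)]
          nlinarith
        have hIoi : IntegrableOn (fun t : ℝ => (min t⁻¹ 3) ^ 2) (Ioi 3⁻¹) := by
          have base : IntegrableOn (fun t : ℝ => t ^ (-2:ℝ)) (Ioi 3⁻¹) :=
            integrableOn_Ioi_rpow_of_lt (by norm_num) (by norm_num)
          refine base.congr_fun (fun t ht => ?_) measurableSet_Ioi
          have ht' : (0:ℝ) < t := lt_trans (by norm_num) ht
          have hle : t⁻¹ ≤ 3 := by
            rw [inv_le_comm₀ ht' (by norm_num)]; exact le_of_lt ht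
          have e1 : t ^ (-2:ℝ) = ((t ^ (2:ℕ) : ℝ))⁻¹ := by
            rw [Real.rpow_neg ht'.le]
            congr 1
            exact_mod_cast Real.rpow_natCast t 2
          rw [min_eq_left hle, inv_pow]; exact e1
        have hint : IntegrableOn (fun t : ℝ => (min t⁻¹ 3) ^ 2) (Ioi 0) := by
          have hu : Ioi (0:ℝ) = Ioc 0 3⁻¹ ∪ Ioi 3⁻¹ := (Ioc_union_Ioi_eq_Ioi (by norm_num)).symm
          rw [hu]
          exact hIoc.union hIoi
        exact hint.lintegral_lt_top

/-- Translation invariance. -/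
lemma lintegral_ball_shift (w : ℂ) :
    ∫⁻ ζ in Metric.ball w 3, ENNReal.ofReal ‖ζ - w‖⁻¹ = C0 := by
  have hm : MeasurableSet (Metric.ball w 3) := measurableSet_ball
  have hm0 : MeasurableSet (Metric.ball (0:ℂ) 3) := measurableSet_ball
  set g : ℂ → ℝ≥0∞ := (Metric.ball (0:ℂ) 3).indicator (fun u => ENNReal.ofReal ‖u‖⁻¹) with hg
  have key : ∀ ζ : ℂ, (Metric.ball w 3).indicator (fun ζ => ENNReal.ofReal ‖ζ - w‖⁻¹) ζ
      = g (ζ + -w) := by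
    intro ζ
    by_cases h : ζ ∈ Metric.ball w 3
    · have h' : ζ + -w ∈ Metric.ball (0:ℂ) 3 := by
        simpa [Metric.mem_ball, dist_eq_norm, sub_eq_add_neg] using h
      simp [indicator_of_mem h, hg, indicator_of_mem h', sub_eq_add_neg]
    · have h' : ζ + -w ∉ Metric.ball (0:ℂ) 3 := by
        simpa [Metric.mem_ball, dist_eq_norm, sub_eq_add_neg] using h
      simp [indicator_of_notMem h, hg, indicator_of_notMem h']
  rw [C0, ← lintegral_indicator hm, ← lintegral_indicator hm0]
  calc ∫⁻ ζ, (Metric.ball w 3).indicator (fun ζ => ENNReal.ofReal ‖ζ - w‖⁻¹) ζ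
      = ∫⁻ ζ, g (ζ + -w) := by simp only [key]
    _ = ∫⁻ u, g u := lintegral_add_right_eq_self g (-w)

/-- Uniform bound for the Riesz-type integral. -/
lemma lint_inv_le {w : ℂ} (hw : ‖w‖ < 2) :
    ∫⁻ ζ in unitDisk, ENNReal.ofReal ‖ζ - w‖⁻¹ ≤ C0 := by
  rw [← lintegral_ball_shift w]
  refine lintegral_mono_set fun ζ hζ => ?_
  rw [unitDisk, mem_ball, dist_zero_right] at hζ
  rw [mem_ball, dist_eq_norm]
  calc ‖ζ - w‖ ≤ ‖ζ‖ + ‖w‖ := norm_sub_le _ _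
  _ < 3 := by linarith

/-- Pointwise bound on the kernel. -/
lemma Kk_norm_le (z ζ : ℂ) :
    ((‖Kk z ζ‖₊ : ℝ≥0) : ℝ≥0∞) ≤
      ENNReal.ofReal ‖ζ - z‖⁻¹ + ENNReal.ofReal (‖z‖ * ‖1 - ζ * conj z‖⁻¹) := by
  have h1 : ‖Kk z ζ‖ ≤ ‖ζ - z‖⁻¹ + ‖z‖ * ‖1 - ζ * conj z‖⁻¹ := by
    refine (norm_add_le _ _).trans ?_
    rw [norm_div, norm_one, one_div, norm_div, RCLike.norm_conj, div_eq_mul_inv]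
  calc ((‖Kk z ζ‖₊ : ℝ≥0) : ℝ≥0∞)
      = ENNReal.ofReal ‖Kk z ζ‖ := (ofReal_norm _).symm
    _ ≤ ENNReal.ofReal (‖ζ - z‖⁻¹ + ‖z‖ * ‖1 - ζ * conj z‖⁻¹) := ENNReal.ofReal_le_ofReal h1
    _ = _ := ENNReal.ofReal_add (by positivity) (by positivity)

/-- The uniform Schur bound. -/
def M : ℝ≥0∞ := C0 + (2 * C0 + 2 * V)

lemma M_lt_top : M < ⊤ := by
  have := C0_lt_top; have := V_lt_top
  simp only [M]
  refine ENNReal.add_lt_top.2 ⟨‹_›, ENNReal.add_lt_top.2 ⟨?_, ?_⟩⟩ <;>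
    exact ENNReal.mul_lt_top (by simp) ‹_›

lemma col2_bound {z : ℂ} (hz : z ∈ unitDisk) :
    ∫⁻ ζ in unitDisk, ENNReal.ofReal (‖z‖ * ‖1 - ζ * conj z‖⁻¹) ≤ 2 * C0 + 2 * V := by
  have hz1 : ‖z‖ < 1 := by simpa [unitDisk, Metric.mem_ball, dist_eq_norm] using hz
  rcases le_or_gt ‖z‖ (1/2) with hz2 | hz2
  · have hb : ∀ ζ ∈ unitDisk, ENNReal.ofReal (‖z‖ * ‖1 - ζ * conj z‖⁻¹) ≤ 1 := by
      intro ζ hζ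
      have hζ1 : ‖ζ‖ < 1 := by simpa [unitDisk, Metric.mem_ball, dist_eq_norm] using hζ
      have hn : ‖ζ * conj z‖ ≤ 1/2 := by
        rw [norm_mul, RCLike.norm_conj]
        nlinarith [norm_nonneg ζ, norm_nonneg z]
      have hd : (1:ℝ)/2 ≤ ‖1 - ζ * conj z‖ := by
        have := norm_sub_norm_le (1:ℂ) (ζ * conj z)
        rw [norm_one] at this
        linarith
      have hinv : ‖1 - ζ * conj z‖⁻¹ ≤ 2 := by
        rw [show (2:ℝ) = ((1:ℝ)/2)⁻¹ by norm_num]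
        exact inv_anti₀ (by norm_num) hd
      have hle1 : ‖z‖ * ‖1 - ζ * conj z‖⁻¹ ≤ 1 := by
        have h0 : 0 ≤ ‖1 - ζ * conj z‖⁻¹ := by positivity
        nlinarith [norm_nonneg z]
      calc ENNReal.ofReal (‖z‖ * ‖1 - ζ * conj z‖⁻¹) ≤ ENNReal.ofReal 1 :=
            ENNReal.ofReal_le_ofReal hle1
        _ = 1 := ENNReal.ofReal_one
    calc ∫⁻ ζ in unitDisk, ENNReal.ofReal (‖z‖ * ‖1 - ζ * conj z‖⁻¹)
        ≤ ∫⁻ _ in unitDisk, (1:ℝ≥0∞) := setLIntegral_mono measurable_const hb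
      _ = V := by simp [V]
      _ ≤ 2 * C0 + 2 * V := by
          calc V ≤ 2 * V := le_mul_of_one_le_left (by positivity) one_le_two
            _ ≤ 2 * C0 + 2 * V := le_add_self
  · have hz0 : z ≠ 0 := by
      intro h; rw [h, norm_zero] at hz2; norm_num at hz2
    have hcz : (conj z : ℂ) ≠ 0 := by simpa using hz0
    set w : ℂ := (conj z)⁻¹ with hw
    have hwn : ‖w‖ < 2 := by
      rw [hw, norm_inv, RCLike.norm_conj]
      rw [inv_lt_comm₀ (by linarith) (by norm_num)]
      linarith
    have heq : ∀ ζ : ℂ, ‖z‖ * ‖1 - ζ * conj z‖⁻¹ = ‖ζ - w‖⁻¹ := by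
      intro ζ
      have h1 : (1:ℂ) - ζ * conj z = conj z * (w - ζ) := by
        field_simp [hw]
        rw [hw, mul_sub, mul_inv_cancel₀ hcz]
        ring
      rw [h1, norm_mul, RCLike.norm_conj, norm_sub_rev, mul_inv]
      have hzn : ‖z‖ ≠ 0 := norm_ne_zero_iff.2 hz0
      rw [← mul_assoc, mul_inv_cancel₀ hzn, one_mul]
    calc ∫⁻ ζ in unitDisk, ENNReal.ofReal (‖z‖ * ‖1 - ζ * conj z‖⁻¹)
        = ∫⁻ ζ in unitDisk, ENNReal.ofReal ‖ζ - w‖⁻¹ := by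
          congr 1; ext ζ; rw [heq ζ]
      _ ≤ C0 := lint_inv_le hwn
      _ ≤ 2 * C0 + 2 * V := by
          calc C0 ≤ 2 * C0 := le_mul_of_one_le_left (by positivity) one_le_two
            _ ≤ 2 * C0 + 2 * V := le_self_add

lemma row2_bound {ζ : ℂ} (hζ : ζ ∈ unitDisk) :
    ∫⁻ z in unitDisk, ENNReal.ofReal (‖z‖ * ‖1 - ζ * conj z‖⁻¹) ≤ 2 * C0 + 2 * V := by
  have hζ1 : ‖ζ‖ < 1 := by simpa [unitDisk, Metric.mem_ball, dist_eq_norm] using hζ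
  rcases le_or_gt ‖ζ‖ (1/2) with hζ2 | hζ2
  · have hb : ∀ z ∈ unitDisk, ENNReal.ofReal (‖z‖ * ‖1 - ζ * conj z‖⁻¹) ≤ 2 := by
      intro z hz
      have hz1 : ‖z‖ < 1 := by simpa [unitDisk, Metric.mem_ball, dist_eq_norm] using hz
      have hn : ‖ζ * conj z‖ ≤ 1/2 := by
        rw [norm_mul, RCLike.norm_conj]
        nlinarith [norm_nonneg ζ, norm_nonneg z]
      have hd : (1:ℝ)/2 ≤ ‖1 - ζ * conj z‖ := by
        have := norm_sub_norm_le (1:ℂ) (ζ * conj z)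
        rw [norm_one] at this
        linarith
      have hinv : ‖1 - ζ * conj z‖⁻¹ ≤ 2 := by
        rw [show (2:ℝ) = ((1:ℝ)/2)⁻¹ by norm_num]
        exact inv_anti₀ (by norm_num) hd
      have hle : ‖z‖ * ‖1 - ζ * conj z‖⁻¹ ≤ 2 := by
        have h0 : 0 ≤ ‖1 - ζ * conj z‖⁻¹ := by positivity
        nlinarith [norm_nonneg z]
      calc ENNReal.ofReal (‖z‖ * ‖1 - ζ * conj z‖⁻¹) ≤ ENNReal.ofReal 2 :=
            ENNReal.ofReal_le_ofReal hle
        _ = 2 := by norm_num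
    calc ∫⁻ z in unitDisk, ENNReal.ofReal (‖z‖ * ‖1 - ζ * conj z‖⁻¹)
        ≤ ∫⁻ _ in unitDisk, (2:ℝ≥0∞) := setLIntegral_mono measurable_const hb
      _ = 2 * V := by simp [V, mul_comm]
      _ ≤ 2 * C0 + 2 * V := le_add_self
  · have hζ0 : ζ ≠ 0 := by
      intro h; rw [h, norm_zero] at hζ2; norm_num at hζ2
    have hcζ : (conj ζ : ℂ) ≠ 0 := by simpa using hζ0
    set w : ℂ := (conj ζ)⁻¹ with hw
    have hwn : ‖w‖ < 2 := by
      rw [hw, norm_inv, RCLike.norm_conj]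
      rw [inv_lt_comm₀ (by linarith) (by norm_num)]
      linarith
    have hinvζ : ‖ζ‖⁻¹ ≤ 2 := by
      rw [show (2:ℝ) = ((1:ℝ)/2)⁻¹ by norm_num]
      exact inv_anti₀ (by norm_num) hζ2.le
    have heq : ∀ z ∈ unitDisk, ENNReal.ofReal (‖z‖ * ‖1 - ζ * conj z‖⁻¹)
        ≤ 2 * ENNReal.ofReal ‖z - w‖⁻¹ := by
      intro z hz
      have hz1 : ‖z‖ < 1 := by simpa [unitDisk, Metric.mem_ball, dist_eq_norm] using hz
      have h1 : ‖1 - ζ * conj z‖ = ‖ζ‖ * ‖z - w‖ := by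
        have h2 : conj ((1:ℂ) - ζ * conj z) = conj ζ * (w - z) := by
          rw [map_sub, map_mul, map_one, Complex.conj_conj]
          field_simp [hw]
          rw [hw, mul_sub, mul_inv_cancel₀ hcζ]
        rw [← RCLike.norm_conj (K := ℂ) (1 - ζ * conj z), h2, norm_mul, RCLike.norm_conj,
          norm_sub_rev]
      have hreal : ‖z‖ * ‖1 - ζ * conj z‖⁻¹ ≤ 2 * ‖z - w‖⁻¹ := by
        rw [h1, mul_inv]
        have h0 : 0 ≤ ‖z - w‖⁻¹ := by positivity
        have h0' : 0 ≤ ‖ζ‖⁻¹ := by positivity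
        have := mul_le_mul hz1.le (mul_le_mul_of_nonneg_right hinvζ h0)
          (by positivity) (by norm_num : (0:ℝ) ≤ 1)
        linarith
      calc ENNReal.ofReal (‖z‖ * ‖1 - ζ * conj z‖⁻¹)
          ≤ ENNReal.ofReal (2 * ‖z - w‖⁻¹) := ENNReal.ofReal_le_ofReal hreal
        _ = 2 * ENNReal.ofReal ‖z - w‖⁻¹ := by
            rw [ENNReal.ofReal_mul (by norm_num)]
            norm_num
    have hmeas : Measurable fun z : ℂ => 2 * ENNReal.ofReal ‖z - w‖⁻¹ :=
      (ENNReal.measurable_ofReal.comp ((measurable_id.sub_const w).norm.inv)).const_mul 2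
    calc ∫⁻ z in unitDisk, ENNReal.ofReal (‖z‖ * ‖1 - ζ * conj z‖⁻¹)
        ≤ ∫⁻ z in unitDisk, 2 * ENNReal.ofReal ‖z - w‖⁻¹ := setLIntegral_mono hmeas heq
      _ = 2 * ∫⁻ z in unitDisk, ENNReal.ofReal ‖z - w‖⁻¹ :=
          lintegral_const_mul 2
            (ENNReal.measurable_ofReal.comp ((measurable_id.sub_const w).norm.inv))
      _ ≤ 2 * C0 := by
          gcongr
          exact lint_inv_le hwn
      _ ≤ 2 * C0 + 2 * V := le_self_add

lemma measurable_N_pair : Measurable fun pr : ℂ × ℂ => ((‖Kk pr.1 pr.2‖₊ : ℝ≥0) : ℝ≥0∞) :=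
  measurable_Kk.enorm

lemma measurable_N_left (z : ℂ) : Measurable fun ζ : ℂ => ((‖Kk z ζ‖₊ : ℝ≥0) : ℝ≥0∞) :=
  (measurable_Kk.comp measurable_prodMk_left).enorm

lemma measurable_N_right (ζ : ℂ) : Measurable fun z : ℂ => ((‖Kk z ζ‖₊ : ℝ≥0) : ℝ≥0∞) :=
  (measurable_Kk.comp measurable_prodMk_right).enorm

/-- Column bound. -/
lemma col_bound {z : ℂ} (hz : z ∈ unitDisk) :
    ∫⁻ ζ in unitDisk, ((‖Kk z ζ‖₊ : ℝ≥0) : ℝ≥0∞) ≤ M := by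
  have hz1 : ‖z‖ < 1 := by simpa [unitDisk, Metric.mem_ball, dist_eq_norm] using hz
  have hf1 : Measurable fun ζ : ℂ => ENNReal.ofReal ‖ζ - z‖⁻¹ :=
    ENNReal.measurable_ofReal.comp ((measurable_id.sub_const z).norm.inv)
  have hf2 : Measurable fun ζ : ℂ => ENNReal.ofReal (‖z‖ * ‖1 - ζ * conj z‖⁻¹) := by
    refine ENNReal.measurable_ofReal.comp (measurable_const.mul ?_)
    exact ((measurable_const.sub (measurable_id.mul_const (conj z))).norm).inv
  calc ∫⁻ ζ in unitDisk, ((‖Kk z ζ‖₊ : ℝ≥0) : ℝ≥0∞)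
      ≤ ∫⁻ ζ in unitDisk,
          (ENNReal.ofReal ‖ζ - z‖⁻¹ + ENNReal.ofReal (‖z‖ * ‖1 - ζ * conj z‖⁻¹)) :=
        setLIntegral_mono (hf1.add hf2) (fun ζ _ => Kk_norm_le z ζ)
    _ = (∫⁻ ζ in unitDisk, ENNReal.ofReal ‖ζ - z‖⁻¹)
          + ∫⁻ ζ in unitDisk, ENNReal.ofReal (‖z‖ * ‖1 - ζ * conj z‖⁻¹) :=
        lintegral_add_left hf1 _
    _ ≤ C0 + (2 * C0 + 2 * V) :=
        add_le_add (lint_inv_le (by linarith)) (col2_bound hz)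

/-- Row bound. -/
lemma row_bound {ζ : ℂ} (hζ : ζ ∈ unitDisk) :
    ∫⁻ z in unitDisk, ((‖Kk z ζ‖₊ : ℝ≥0) : ℝ≥0∞) ≤ M := by
  have hζ1 : ‖ζ‖ < 1 := by simpa [unitDisk, Metric.mem_ball, dist_eq_norm] using hζ
  have hf1 : Measurable fun z : ℂ => ENNReal.ofReal ‖ζ - z‖⁻¹ :=
    ENNReal.measurable_ofReal.comp ((measurable_const.sub measurable_id).norm.inv)
  have hf2 : Measurable fun z : ℂ => ENNReal.ofReal (‖z‖ * ‖1 - ζ * conj z‖⁻¹) := by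
    refine ENNReal.measurable_ofReal.comp (measurable_norm.mul ?_)
    have hconj : Measurable fun z : ℂ => (starRingEnd ℂ) z :=
      (RCLike.continuous_conj (K := ℂ)).measurable
    exact ((measurable_const.sub (hconj.const_mul ζ)).norm).inv
  calc ∫⁻ z in unitDisk, ((‖Kk z ζ‖₊ : ℝ≥0) : ℝ≥0∞)
      ≤ ∫⁻ z in unitDisk,
          (ENNReal.ofReal ‖ζ - z‖⁻¹ + ENNReal.ofReal (‖z‖ * ‖1 - ζ * conj z‖⁻¹)) :=
        setLIntegral_mono (hf1.add hf2) (fun z _ => Kk_norm_le z ζ)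
    _ = (∫⁻ z in unitDisk, ENNReal.ofReal ‖ζ - z‖⁻¹)
          + ∫⁻ z in unitDisk, ENNReal.ofReal (‖z‖ * ‖1 - ζ * conj z‖⁻¹) :=
        lintegral_add_left hf1 _
    _ ≤ C0 + (2 * C0 + 2 * V) := by
        refine add_le_add ?_ (row2_bound hζ)
        have : ∀ z : ℂ, ENNReal.ofReal ‖ζ - z‖⁻¹ = ENNReal.ofReal ‖z - ζ‖⁻¹ := fun z => by
          rw [norm_sub_rev]
        simp only [this]
        exact lint_inv_le (by linarith)

end GreenAux

set_option maxHeartbeats 2000000 in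
/-- For every `p > 1`, the operator `𝒦` is a bounded (linear) operator from
`L_p(𝔻)` to `L_p(𝔻)`. -/
theorem greenOp_bounded (p : ℝ) (hp : 1 < p) :
    ∃ C : ℝ, 0 ≤ C ∧ ∀ φ : ℂ → ℂ,
      MemLp φ (ENNReal.ofReal p) (volume.restrict unitDisk) →
        MemLp (greenOp φ) (ENNReal.ofReal p) (volume.restrict unitDisk) ∧
        eLpNorm (greenOp φ) (ENNReal.ofReal p) (volume.restrict unitDisk) ≤
          ENNReal.ofReal C * eLpNorm φ (ENNReal.ofReal p) (volume.restrict unitDisk) := by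
  classical
  have hq : p.HolderConjugate (p / (p - 1)) := Real.HolderConjugate.conjExponent hp
  set q := p / (p - 1) with hqdef
  have hp0 : 0 < p := hq.pos
  have hq0 : 0 < q := hq.symm.pos
  have hMne : GreenAux.M ≠ ⊤ := GreenAux.M_lt_top.ne
  have hπ : ((ENNReal.ofReal Real.pi)⁻¹ : ℝ≥0∞) ≠ ⊤ := by
    rw [ENNReal.inv_ne_top]
    exact (ENNReal.ofReal_pos.2 Real.pi_pos).ne'
  set Mc : ℝ≥0∞ := (ENNReal.ofReal Real.pi)⁻¹ * GreenAux.M with hMc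
  have hMcne : Mc ≠ ⊤ := ENNReal.mul_ne_top hπ hMne
  refine ⟨Mc.toReal, ENNReal.toReal_nonneg, ?_⟩
  intro φ hφ
  have hofr : ENNReal.ofReal Mc.toReal = Mc := ENNReal.ofReal_toReal hMcne
  -- replace `φ` by a globally measurable representative
  set ψ := hφ.1.mk φ with hψdef
  have hψsm : StronglyMeasurable ψ := hφ.1.stronglyMeasurable_mk
  have hψm : Measurable ψ := hψsm.measurable
  have hψeq : φ =ᵐ[volume.restrict unitDisk] ψ := hφ.1.ae_eq_mk
  have hGeq : greenOp φ = greenOp ψ := by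
    funext z
    unfold greenOp
    congr 1
    exact integral_congr_ae (hψeq.mono fun ζ h => by simp only [h])
  have heLφ : eLpNorm φ (ENNReal.ofReal p) (volume.restrict unitDisk)
      = eLpNorm ψ (ENNReal.ofReal p) (volume.restrict unitDisk) := eLpNorm_congr_ae hψeq
  have hψn : Measurable fun ζ : ℂ => ((‖ψ ζ‖₊ : ℝ≥0) : ℝ≥0∞) := hψm.enorm
  -- Step A : pointwise bound by the lintegral of the kernel against `‖ψ‖`
  have stepA : ∀ z : ℂ, ((‖greenOp ψ z‖₊ : ℝ≥0) : ℝ≥0∞) ≤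
      (ENNReal.ofReal Real.pi)⁻¹ * ∫⁻ ζ in unitDisk, ((‖GreenAux.Kk z ζ‖₊ : ℝ≥0) : ℝ≥0∞) * ((‖ψ ζ‖₊ : ℝ≥0) : ℝ≥0∞) := by
    intro z
    have hrepr : greenOp ψ z = (1 / (Real.pi : ℂ)) * ∫ ζ in unitDisk, GreenAux.Kk z ζ * ψ ζ := rfl
    have hcoef : ((‖(1 / (Real.pi : ℂ))‖₊ : ℝ≥0) : ℝ≥0∞) = (ENNReal.ofReal Real.pi)⁻¹ := by
      rw [← enorm_eq_nnnorm, ← ofReal_norm, norm_div, norm_one, Complex.norm_real,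
        Real.norm_eq_abs, _root_.abs_of_pos Real.pi_pos, one_div,
        ENNReal.ofReal_inv_of_pos Real.pi_pos]
    calc ((‖greenOp ψ z‖₊ : ℝ≥0) : ℝ≥0∞)
        = ((‖(1 / (Real.pi : ℂ))‖₊ : ℝ≥0) : ℝ≥0∞)
            * ((‖∫ ζ in unitDisk, GreenAux.Kk z ζ * ψ ζ‖₊ : ℝ≥0) : ℝ≥0∞) := by
          rw [hrepr, nnnorm_mul, ENNReal.coe_mul]
      _ ≤ ((‖(1 / (Real.pi : ℂ))‖₊ : ℝ≥0) : ℝ≥0∞)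
            * ∫⁻ ζ in unitDisk, ((‖GreenAux.Kk z ζ * ψ ζ‖₊ : ℝ≥0) : ℝ≥0∞) :=
          mul_le_mul_right (enorm_integral_le_lintegral_enorm _) _
      _ = (ENNReal.ofReal Real.pi)⁻¹ * ∫⁻ ζ in unitDisk, ((‖GreenAux.Kk z ζ‖₊ : ℝ≥0) : ℝ≥0∞) * ((‖ψ ζ‖₊ : ℝ≥0) : ℝ≥0∞) := by
          rw [hcoef]
          congr 1
          refine lintegral_congr fun ζ => ?_
          rw [nnnorm_mul, ENNReal.coe_mul]
  -- Step B : Hölder's inequality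
  have hsum : 1 / p + 1 / q = 1 := by
    rw [one_div, one_div]; exact hq.inv_add_inv_eq_one
  have stepB : ∀ z ∈ unitDisk,
      (∫⁻ ζ in unitDisk, ((‖GreenAux.Kk z ζ‖₊ : ℝ≥0) : ℝ≥0∞) * ((‖ψ ζ‖₊ : ℝ≥0) : ℝ≥0∞))
        ≤ GreenAux.M ^ (1 / q) *
            (∫⁻ ζ in unitDisk, ((‖GreenAux.Kk z ζ‖₊ : ℝ≥0) : ℝ≥0∞) * ((‖ψ ζ‖₊ : ℝ≥0) : ℝ≥0∞) ^ p) ^ (1 / p) := by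
    intro z hz
    set f : ℂ → ℝ≥0∞ := fun ζ => ((‖GreenAux.Kk z ζ‖₊ : ℝ≥0) : ℝ≥0∞) ^ (1 / p) * ((‖ψ ζ‖₊ : ℝ≥0) : ℝ≥0∞) with hf
    set g : ℂ → ℝ≥0∞ := fun ζ => ((‖GreenAux.Kk z ζ‖₊ : ℝ≥0) : ℝ≥0∞) ^ (1 / q) with hg
    have hfm : AEMeasurable f (volume.restrict unitDisk) :=
      (((GreenAux.measurable_N_left z).pow_const _).mul hψn).aemeasurable
    have hgm : AEMeasurable g (volume.restrict unitDisk) :=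
      ((GreenAux.measurable_N_left z).pow_const _).aemeasurable
    have hH := ENNReal.lintegral_mul_le_Lp_mul_Lq (volume.restrict unitDisk) hq hfm hgm
    have hfg : ∀ ζ, (f * g) ζ = ((‖GreenAux.Kk z ζ‖₊ : ℝ≥0) : ℝ≥0∞) * ((‖ψ ζ‖₊ : ℝ≥0) : ℝ≥0∞) := by
      intro ζ
      have : f ζ * g ζ = ((‖GreenAux.Kk z ζ‖₊ : ℝ≥0) : ℝ≥0∞) ^ (1 / p) * ((‖GreenAux.Kk z ζ‖₊ : ℝ≥0) : ℝ≥0∞) ^ (1 / q) * ((‖ψ ζ‖₊ : ℝ≥0) : ℝ≥0∞) := by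
        rw [hf, hg]; ring
      rw [Pi.mul_apply, this, ← ENNReal.rpow_add_of_nonneg _ _ (by positivity)
        (le_of_lt (by positivity)), hsum, ENNReal.rpow_one]
    have hfp : ∀ ζ, f ζ ^ p = ((‖GreenAux.Kk z ζ‖₊ : ℝ≥0) : ℝ≥0∞) * ((‖ψ ζ‖₊ : ℝ≥0) : ℝ≥0∞) ^ p := by
      intro ζ
      rw [hf, ENNReal.mul_rpow_of_nonneg _ _ hp0.le, ← ENNReal.rpow_mul,
        one_div_mul_cancel hp0.ne', ENNReal.rpow_one]
    have hgq : ∀ ζ, g ζ ^ q = ((‖GreenAux.Kk z ζ‖₊ : ℝ≥0) : ℝ≥0∞) := by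
      intro ζ
      rw [hg, ← ENNReal.rpow_mul, one_div_mul_cancel hq0.ne', ENNReal.rpow_one]
    calc ∫⁻ ζ in unitDisk, ((‖GreenAux.Kk z ζ‖₊ : ℝ≥0) : ℝ≥0∞) * ((‖ψ ζ‖₊ : ℝ≥0) : ℝ≥0∞)
        = ∫⁻ ζ in unitDisk, (f * g) ζ := by
          exact (lintegral_congr fun ζ => (hfg ζ).symm)
      _ ≤ (∫⁻ ζ in unitDisk, f ζ ^ p) ^ (1 / p) * (∫⁻ ζ in unitDisk, g ζ ^ q) ^ (1 / q) := hH
      _ = (∫⁻ ζ in unitDisk, ((‖GreenAux.Kk z ζ‖₊ : ℝ≥0) : ℝ≥0∞) * ((‖ψ ζ‖₊ : ℝ≥0) : ℝ≥0∞) ^ p) ^ (1 / p)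
            * (∫⁻ ζ in unitDisk, ((‖GreenAux.Kk z ζ‖₊ : ℝ≥0) : ℝ≥0∞)) ^ (1 / q) := by
          rw [lintegral_congr hfp, lintegral_congr hgq]
      _ ≤ (∫⁻ ζ in unitDisk, ((‖GreenAux.Kk z ζ‖₊ : ℝ≥0) : ℝ≥0∞) * ((‖ψ ζ‖₊ : ℝ≥0) : ℝ≥0∞) ^ p) ^ (1 / p)
            * GreenAux.M ^ (1 / q) := by
          gcongr
          exact GreenAux.col_bound hz
      _ = GreenAux.M ^ (1 / q)
            * (∫⁻ ζ in unitDisk, ((‖GreenAux.Kk z ζ‖₊ : ℝ≥0) : ℝ≥0∞) * ((‖ψ ζ‖₊ : ℝ≥0) : ℝ≥0∞) ^ p) ^ (1 / p) := mul_comm _ _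
  -- Step C : raise to the power `p`
  set c1 : ℝ≥0∞ := ((ENNReal.ofReal Real.pi)⁻¹) ^ p * (GreenAux.M ^ (1 / q)) ^ p with hc1
  have stepC : ∀ z ∈ unitDisk, ((‖greenOp ψ z‖₊ : ℝ≥0) : ℝ≥0∞) ^ p ≤
      c1 * ∫⁻ ζ in unitDisk, ((‖GreenAux.Kk z ζ‖₊ : ℝ≥0) : ℝ≥0∞) * ((‖ψ ζ‖₊ : ℝ≥0) : ℝ≥0∞) ^ p := by
    intro z hz
    have h1 := (stepA z).trans (mul_le_mul_right (stepB z hz) _)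
    have h2 := ENNReal.rpow_le_rpow h1 hp0.le
    refine h2.trans (le_of_eq ?_)
    rw [ENNReal.mul_rpow_of_nonneg _ _ hp0.le, ENNReal.mul_rpow_of_nonneg _ _ hp0.le,
      ← ENNReal.rpow_mul
        (∫⁻ ζ in unitDisk, ((‖GreenAux.Kk z ζ‖₊ : ℝ≥0) : ℝ≥0∞) * ((‖ψ ζ‖₊ : ℝ≥0) : ℝ≥0∞) ^ p),
      one_div_mul_cancel hp0.ne', ENNReal.rpow_one, hc1]
    ring
  -- Step D : integrate in `z` and apply Tonelli
  have hFmeas : Measurable fun pr : ℂ × ℂ => ((‖GreenAux.Kk pr.1 pr.2‖₊ : ℝ≥0) : ℝ≥0∞) * ((‖ψ pr.2‖₊ : ℝ≥0) : ℝ≥0∞) ^ p :=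
    GreenAux.measurable_N_pair.mul (((hψm.comp measurable_snd).enorm).pow_const p)
  have hInner : Measurable fun z => ∫⁻ ζ in unitDisk, ((‖GreenAux.Kk z ζ‖₊ : ℝ≥0) : ℝ≥0∞) * ((‖ψ ζ‖₊ : ℝ≥0) : ℝ≥0∞) ^ p :=
    hFmeas.lintegral_prod_right'
  have hexp : 1 / q * p + 1 = p := by
    have h := hq.inv_add_inv_eq_one
    have h1 : q⁻¹ = 1 - p⁻¹ := by linarith
    have h2 : (1 / q) * p = p - 1 := by
      rw [one_div, h1, sub_mul, one_mul, inv_mul_cancel₀ hp0.ne']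
    linarith
  have hc1M : c1 * GreenAux.M = Mc ^ p := by
    rw [hMc, ENNReal.mul_rpow_of_nonneg _ _ hp0.le, hc1, ← ENNReal.rpow_mul GreenAux.M,
      mul_assoc]
    congr 1
    calc GreenAux.M ^ (1 / q * p) * GreenAux.M
        = GreenAux.M ^ (1 / q * p) * GreenAux.M ^ (1 : ℝ) := by rw [ENNReal.rpow_one]
      _ = GreenAux.M ^ (1 / q * p + 1) :=
          (ENNReal.rpow_add_of_nonneg _ _ (mul_nonneg (by positivity) hp0.le) zero_le_one).symm
      _ = GreenAux.M ^ p := by rw [hexp]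
  have stepD : ∫⁻ z in unitDisk, ((‖greenOp ψ z‖₊ : ℝ≥0) : ℝ≥0∞) ^ p ≤
      Mc ^ p * ∫⁻ ζ in unitDisk, ((‖ψ ζ‖₊ : ℝ≥0) : ℝ≥0∞) ^ p := by
    calc ∫⁻ z in unitDisk, ((‖greenOp ψ z‖₊ : ℝ≥0) : ℝ≥0∞) ^ p
        ≤ ∫⁻ z in unitDisk, c1 * ∫⁻ ζ in unitDisk, ((‖GreenAux.Kk z ζ‖₊ : ℝ≥0) : ℝ≥0∞) * ((‖ψ ζ‖₊ : ℝ≥0) : ℝ≥0∞) ^ p :=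
          setLIntegral_mono (hInner.const_mul c1) stepC
      _ = c1 * ∫⁻ z in unitDisk, ∫⁻ ζ in unitDisk, ((‖GreenAux.Kk z ζ‖₊ : ℝ≥0) : ℝ≥0∞) * ((‖ψ ζ‖₊ : ℝ≥0) : ℝ≥0∞) ^ p :=
          lintegral_const_mul c1 hInner
      _ = c1 * ∫⁻ ζ in unitDisk, ∫⁻ z in unitDisk, ((‖GreenAux.Kk z ζ‖₊ : ℝ≥0) : ℝ≥0∞) * ((‖ψ ζ‖₊ : ℝ≥0) : ℝ≥0∞) ^ p := by
          congr 1
          exact lintegral_lintegral_swap hFmeas.aemeasurable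
      _ = c1 * ∫⁻ ζ in unitDisk, (∫⁻ z in unitDisk, ((‖GreenAux.Kk z ζ‖₊ : ℝ≥0) : ℝ≥0∞)) * ((‖ψ ζ‖₊ : ℝ≥0) : ℝ≥0∞) ^ p := by
          congr 1
          refine lintegral_congr fun ζ => ?_
          exact lintegral_mul_const _ (GreenAux.measurable_N_right ζ)
      _ ≤ c1 * ∫⁻ ζ in unitDisk, GreenAux.M * ((‖ψ ζ‖₊ : ℝ≥0) : ℝ≥0∞) ^ p := by
          refine mul_le_mul_right ?_ c1
          refine setLIntegral_mono (measurable_const.mul (hψn.pow_const p)) ?_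
          exact fun ζ hζ => mul_le_mul_left (GreenAux.row_bound hζ) _
      _ = c1 * (GreenAux.M * ∫⁻ ζ in unitDisk, ((‖ψ ζ‖₊ : ℝ≥0) : ℝ≥0∞) ^ p) := by
          rw [lintegral_const_mul _ (hψn.pow_const p)]
      _ = Mc ^ p * ∫⁻ ζ in unitDisk, ((‖ψ ζ‖₊ : ℝ≥0) : ℝ≥0∞) ^ p := by
          rw [← mul_assoc, hc1M]
  -- conclude
  have hnp0 : (ENNReal.ofReal p) ≠ 0 := by
    rw [Ne, ENNReal.ofReal_eq_zero, not_le]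
    linarith
  have hnpt : (ENNReal.ofReal p) ≠ ⊤ := ENNReal.ofReal_ne_top
  have htr : (ENNReal.ofReal p).toReal = p := ENNReal.toReal_ofReal hp0.le
  have keyψ : eLpNorm (greenOp ψ) (ENNReal.ofReal p) (volume.restrict unitDisk)
      ≤ Mc * eLpNorm ψ (ENNReal.ofReal p) (volume.restrict unitDisk) := by
    rw [eLpNorm_eq_lintegral_rpow_enorm_toReal hnp0 hnpt, eLpNorm_eq_lintegral_rpow_enorm_toReal hnp0 hnpt,
      htr]
    calc (∫⁻ z in unitDisk, ((‖greenOp ψ z‖₊ : ℝ≥0) : ℝ≥0∞) ^ p) ^ (1 / p)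
        ≤ (Mc ^ p * ∫⁻ ζ in unitDisk, ((‖ψ ζ‖₊ : ℝ≥0) : ℝ≥0∞) ^ p) ^ (1 / p) :=
          ENNReal.rpow_le_rpow stepD (by positivity)
      _ = Mc * (∫⁻ ζ in unitDisk, ((‖ψ ζ‖₊ : ℝ≥0) : ℝ≥0∞) ^ p) ^ (1 / p) := by
          rw [ENNReal.mul_rpow_of_nonneg _ _ (by positivity), ← ENNReal.rpow_mul,
            mul_one_div_cancel hp0.ne', ENNReal.rpow_one]
  have hsm : AEStronglyMeasurable (greenOp φ) (volume.restrict unitDisk) := by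
    rw [hGeq]
    have h1 : StronglyMeasurable fun pr : ℂ × ℂ => GreenAux.Kk pr.1 pr.2 * ψ pr.2 :=
      (GreenAux.measurable_Kk.mul (hψm.comp measurable_snd)).stronglyMeasurable
    have h2 : StronglyMeasurable fun z => ∫ ζ in unitDisk, GreenAux.Kk z ζ * ψ ζ :=
      h1.integral_prod_right'
    have hrepr : greenOp ψ = fun z =>
        (1 / (Real.pi : ℂ)) * ∫ ζ in unitDisk, GreenAux.Kk z ζ * ψ ζ := rfl
    rw [hrepr]
    exact (stronglyMeasurable_const.mul h2).aestronglyMeasurable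
  have hlt : eLpNorm (greenOp φ) (ENNReal.ofReal p) (volume.restrict unitDisk) < ⊤ := by
    rw [hGeq]
    refine lt_of_le_of_lt keyψ ?_
    exact ENNReal.mul_lt_top hMcne.lt_top (heLφ ▸ hφ.2)
  refine ⟨⟨hsm, hlt⟩, ?_⟩
  rw [hofr, hGeq, heLφ]
  exact keyψ
end
end

section
/- Let K be the Beurling transform Kφ(z) = (1/π) p.v.∫_ℂ φ(ζ)/(ζ−z)² dμ(ζ) and let 𝒦_z be its restriction-to-the-disk version 𝒦_z[φ](z) = (1/π) p.v.∫_𝔻 φ(ζ)/(ζ−z)² dμ(ζ) acting on L_p(𝔻). Then for every p > 1 the operator 𝒦_z : L_p(𝔻) → L_p(𝔻) is bounded and its operator norm equals the L_p(ℂ) operator norm of K. -/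
open Complex Metric Set MeasureTheory ComplexConjugate Real Filter Topology

noncomputable section

open scoped ENNReal NNReal

namespace BeurlingAux

lemma map_mul_volume {R : ℝ} (hR : 0 < R) :
    Measure.map (fun z : ℂ => (R : ℂ) * z) volume
      = ENNReal.ofReal ((R ^ 2)⁻¹) • volume := by
  have h := Measure.map_addHaar_smul (volume : Measure ℂ) (ne_of_gt hR)
  have heq : (fun z : ℂ => R • z) = fun z : ℂ => (R : ℂ) * z := by
    funext z; exact Complex.real_smul
  rw [heq] at h
  rw [h, Complex.finrank_real_complex]
  congr 1
  rw [_root_.abs_of_nonneg (by positivity : (0:ℝ) ≤ (R ^ 2)⁻¹)]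

lemma lintegral_scale {f : ℂ → ℝ≥0∞} (hf : AEMeasurable f volume) {R : ℝ} (hR : 0 < R) :
    ∫⁻ z : ℂ, f ((R : ℂ) * z) = ENNReal.ofReal ((R ^ 2)⁻¹) * ∫⁻ z : ℂ, f z := by
  have hmeas : Measurable fun z : ℂ => (R : ℂ) * z := measurable_const_mul _
  have hf' : AEMeasurable f (Measure.map (fun z : ℂ => (R : ℂ) * z) volume) := by
    rw [map_mul_volume hR]
    exact hf.mono_ac Measure.smul_absolutelyContinuous
  rw [← lintegral_map' hf' hmeas.aemeasurable, map_mul_volume hR, lintegral_smul_measure, smul_eq_mul]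

lemma ae_scale {P : ℂ → Prop} (h : ∀ᵐ w : ℂ, P w) {R : ℝ} (hR : 0 < R) :
    ∀ᵐ z : ℂ, P ((R : ℂ) * z) := by
  have hq : Measure.QuasiMeasurePreserving (fun z : ℂ => (R : ℂ) * z) volume volume := by
    have := Measure.quasiMeasurePreserving_smul (volume : Measure ℂ) (ne_of_gt hR)
    have heq : (fun z : ℂ => R • z) = fun z : ℂ => (R : ℂ) * z := by
      funext z; exact Complex.real_smul
    rwa [heq] at this
  exact hq.ae h

end BeurlingAux

namespace BeurlingAux

lemma aesm_kernel_integral {φ : ℂ → ℂ} (hφ : AEStronglyMeasurable φ volume) {k : ℂ → ℂ}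
    (hk : Measurable k) :
    AEStronglyMeasurable (fun z : ℂ => ∫ ζ : ℂ, φ ζ * k (ζ - z)) volume := by
  have h : AEStronglyMeasurable (fun q : ℂ × ℂ => φ q.2 * k (q.2 - q.1)) (volume.prod volume) :=
    (hφ.comp_quasiMeasurePreserving Measure.quasiMeasurePreserving_snd).mul ((hk.comp (measurable_snd.sub measurable_fst)).aestronglyMeasurable)
  exact h.integral_prod_right'

lemma aesm_of_pv {φ g : ℂ → ℂ} (hφ : AEStronglyMeasurable φ volume)
    (h : ∀ᵐ z : ℂ, Tendsto
        (fun ε : ℝ => (1 / (Real.pi : ℂ)) *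
          ∫ ζ in {ζ : ℂ | ε < dist ζ z}, φ ζ / (ζ - z) ^ 2)
        (𝓝[>] (0:ℝ)) (𝓝 (g z))) :
    AEStronglyMeasurable g volume := by
  set F : ℕ → ℂ → ℂ := fun n z => (1 / (Real.pi : ℂ)) *
      ∫ ζ : ℂ, φ ζ * (if (1/((n:ℝ)+1)) < ‖ζ - z‖ then ((ζ - z)^2)⁻¹ else 0) with hF
  have hFm : ∀ n, AEStronglyMeasurable (F n) volume := by
    intro n
    apply AEStronglyMeasurable.const_mul
    have hk : Measurable fun u : ℂ => (if (1/((n:ℝ)+1)) < ‖u‖ then (u^2)⁻¹ else 0) := by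
      exact Measurable.ite (measurableSet_lt measurable_const measurable_norm)
        ((measurable_id.pow_const 2).inv) measurable_const
    exact aesm_kernel_integral hφ hk
  have hseq : Tendsto (fun n : ℕ => 1/((n:ℝ)+1)) atTop (𝓝[>] (0:ℝ)) := by
    apply tendsto_nhdsWithin_of_tendsto_nhds_of_eventually_within
    · exact tendsto_one_div_add_atTop_nhds_zero_nat
    · exact Eventually.of_forall (fun n => by simp [Set.mem_Ioi]; positivity)
  have hlim : ∀ᵐ z : ℂ, Tendsto (fun n => F n z) atTop (𝓝 (g z)) := by
    filter_upwards [h] with z hz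
    have hcomp := hz.comp hseq
    apply hcomp.congr
    intro n
    have hs : MeasurableSet {ζ : ℂ | (1/((n:ℝ)+1)) < dist ζ z} :=
      measurableSet_lt measurable_const (measurable_id.dist measurable_const)
    have hker : ∀ ζ : ℂ, {ζ : ℂ | (1/((n:ℝ)+1)) < dist ζ z}.indicator
        (fun ζ => φ ζ / (ζ - z)^2) ζ
        = φ ζ * (if (1/((n:ℝ)+1)) < ‖ζ - z‖ then ((ζ - z)^2)⁻¹ else 0) := by
      intro ζ
      by_cases hc : (1/((n:ℝ)+1)) < dist ζ z
      · rw [Set.indicator_of_mem (show ζ ∈ {ζ : ℂ | (1/((n:ℝ)+1)) < dist ζ z} from hc),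
          if_pos (by rwa [dist_eq_norm] at hc), div_eq_mul_inv]
      · rw [Set.indicator_of_notMem (show ζ ∉ {ζ : ℂ | (1/((n:ℝ)+1)) < dist ζ z} from hc),
          if_neg (by rwa [dist_eq_norm] at hc), mul_zero]
    show (1 / (Real.pi : ℂ)) * ∫ ζ in {ζ : ℂ | (1/((n:ℝ)+1)) < dist ζ z}, φ ζ / (ζ - z)^2
        = F n z
    rw [hF]
    simp only
    rw [← integral_indicator hs]
    exact congrArg _ (integral_congr_ae (Eventually.of_forall hker))
  exact aestronglyMeasurable_of_tendsto_ae atTop hFm hlim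

end BeurlingAux


namespace BeurlingAux

lemma kz_eq_k_indicator {φ f g : ℂ → ℂ}
    (h2 : ∀ᵐ z : ℂ, Tendsto (fun ε : ℝ => (1 / (Real.pi : ℂ)) *
          ∫ ζ in {ζ : ℂ | ε < dist ζ z}, (unitDisk.indicator φ) ζ / (ζ - z) ^ 2)
        (𝓝[>] (0:ℝ)) (𝓝 (f z)))
    (h1 : ∀ᵐ z ∂(volume.restrict unitDisk), Tendsto (fun ε : ℝ => (1 / (Real.pi : ℂ)) *
          ∫ ζ in unitDisk ∩ {ζ : ℂ | ε < dist ζ z}, φ ζ / (ζ - z) ^ 2)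
        (𝓝[>] (0:ℝ)) (𝓝 (g z))) :
    g =ᵐ[volume.restrict unitDisk] f := by
  have hUm : MeasurableSet unitDisk := measurableSet_ball
  filter_upwards [h1, ae_restrict_of_ae h2] with z hz1 hz2
  refine tendsto_nhds_unique (hz1.congr fun ε => ?_) hz2
  congr 1
  have hind : ∀ ζ : ℂ, (unitDisk.indicator φ) ζ / (ζ - z)^2
      = unitDisk.indicator (fun ζ => φ ζ / (ζ - z)^2) ζ := by
    intro ζ; by_cases hζ : ζ ∈ unitDisk
    · rw [Set.indicator_of_mem hζ, Set.indicator_of_mem hζ]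
    · rw [Set.indicator_of_notMem hζ, Set.indicator_of_notMem hζ, zero_div]
  have hstep : ∫ ζ in {ζ : ℂ | ε < dist ζ z}, unitDisk.indicator φ ζ / (ζ - z)^2
      = ∫ ζ in unitDisk ∩ {ζ : ℂ | ε < dist ζ z}, φ ζ / (ζ - z)^2 := by
    calc ∫ ζ in {ζ : ℂ | ε < dist ζ z}, unitDisk.indicator φ ζ / (ζ - z)^2
        = ∫ ζ in {ζ : ℂ | ε < dist ζ z}, unitDisk.indicator (fun ζ => φ ζ / (ζ - z)^2) ζ :=
          setIntegral_congr_ae (measurableSet_lt measurable_const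
            (measurable_id.dist measurable_const)) (Eventually.of_forall fun ζ _ => hind ζ)
      _ = ∫ ζ in {ζ : ℂ | ε < dist ζ z} ∩ unitDisk, φ ζ / (ζ - z)^2 :=
          setIntegral_indicator hUm
      _ = ∫ ζ in unitDisk ∩ {ζ : ℂ | ε < dist ζ z}, φ ζ / (ζ - z)^2 := by rw [Set.inter_comm]
  rw [hstep]

lemma easy_bound {p : ℝ} {K Kz : (ℂ → ℂ) → (ℂ → ℂ)}
    (hK_pv : ∀ φ : ℂ → ℂ, MemLp φ (ENNReal.ofReal p) volume →
      ∀ᵐ z : ℂ, Tendsto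
        (fun ε : ℝ => (1 / (Real.pi : ℂ)) *
          ∫ ζ in {ζ : ℂ | ε < dist ζ z}, φ ζ / (ζ - z) ^ 2)
        (𝓝[>] (0:ℝ)) (𝓝 (K φ z)))
    (hKz_pv : ∀ φ : ℂ → ℂ, MemLp φ (ENNReal.ofReal p) (volume.restrict unitDisk) →
      ∀ᵐ z ∂(volume.restrict unitDisk), Tendsto
        (fun ε : ℝ => (1 / (Real.pi : ℂ)) *
          ∫ ζ in unitDisk ∩ {ζ : ℂ | ε < dist ζ z}, φ ζ / (ζ - z) ^ 2)
        (𝓝[>] (0:ℝ)) (𝓝 (Kz φ z)))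
    {C : ℝ} (hC : ∀ φ : ℂ → ℂ, MemLp φ (ENNReal.ofReal p) volume →
      eLpNorm (K φ) (ENNReal.ofReal p) volume ≤
        ENNReal.ofReal C * eLpNorm φ (ENNReal.ofReal p) volume)
    {φ : ℂ → ℂ} (hφ : MemLp φ (ENNReal.ofReal p) (volume.restrict unitDisk)) :
    eLpNorm (Kz φ) (ENNReal.ofReal p) (volume.restrict unitDisk) ≤
      ENNReal.ofReal C * eLpNorm φ (ENNReal.ofReal p) (volume.restrict unitDisk) := by
  have hUm : MeasurableSet unitDisk := measurableSet_ball
  have hφ1 : MemLp (unitDisk.indicator φ) (ENNReal.ofReal p) volume :=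
    (memLp_indicator_iff_restrict hUm).2 hφ
  have heq := kz_eq_k_indicator (hK_pv _ hφ1) (hKz_pv φ hφ)
  calc eLpNorm (Kz φ) (ENNReal.ofReal p) (volume.restrict unitDisk)
      = eLpNorm (K (unitDisk.indicator φ)) (ENNReal.ofReal p) (volume.restrict unitDisk) :=
        eLpNorm_congr_ae heq
    _ ≤ eLpNorm (K (unitDisk.indicator φ)) (ENNReal.ofReal p) volume :=
        eLpNorm_mono_measure _ Measure.restrict_le_self
    _ ≤ ENNReal.ofReal C * eLpNorm (unitDisk.indicator φ) (ENNReal.ofReal p) volume := hC _ hφ1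
    _ = ENNReal.ofReal C * eLpNorm φ (ENNReal.ofReal p) (volume.restrict unitDisk) := by
        rw [eLpNorm_indicator_eq_eLpNorm_restrict hUm]

end BeurlingAux

namespace BeurlingAux

def tailInt (q R : ℝ) : ℝ≥0∞ :=
  ∫⁻ ζ in (Metric.ball (0:ℂ) R)ᶜ, (ENNReal.ofReal ((‖ζ‖^2)⁻¹))^q

lemma tail_kernel_bound {q : ℝ} (hq : 1 < q) {R a : ℝ} (hR : 0 < R) (ha : 0 < a) {z : ℂ}
    (haz : ∀ ζ : ℂ, ζ ∈ (Metric.ball (0:ℂ) R)ᶜ → a * ‖ζ‖ ≤ ‖ζ - z‖) :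
    ∫⁻ ζ, (((Metric.ball (0:ℂ) R)ᶜ).indicator
        (fun ζ => (‖((ζ - z)^2)⁻¹‖₊ : ℝ≥0∞)) ζ)^q
      ≤ ENNReal.ofReal (((a^2)⁻¹)^q) * tailInt q R := by
  have hq0 : (0:ℝ) ≤ q := by linarith
  have hmeas : MeasurableSet ((Metric.ball (0:ℂ) R)ᶜ) := measurableSet_ball.compl
  have hind : ∀ ζ : ℂ, (((Metric.ball (0:ℂ) R)ᶜ).indicator
        (fun ζ => (‖((ζ - z)^2)⁻¹‖₊ : ℝ≥0∞)) ζ)^q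
      = ((Metric.ball (0:ℂ) R)ᶜ).indicator
        (fun ζ => ((‖((ζ - z)^2)⁻¹‖₊ : ℝ≥0∞))^q) ζ := by
    intro ζ
    by_cases hζ : ζ ∈ (Metric.ball (0:ℂ) R)ᶜ
    · rw [Set.indicator_of_mem hζ, Set.indicator_of_mem hζ]
    · rw [Set.indicator_of_notMem hζ, Set.indicator_of_notMem hζ,
        ENNReal.zero_rpow_of_pos (by linarith)]
  calc ∫⁻ ζ, (((Metric.ball (0:ℂ) R)ᶜ).indicator
        (fun ζ => (‖((ζ - z)^2)⁻¹‖₊ : ℝ≥0∞)) ζ)^q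
      = ∫⁻ ζ in (Metric.ball (0:ℂ) R)ᶜ, ((‖((ζ - z)^2)⁻¹‖₊ : ℝ≥0∞))^q := by
        rw [← lintegral_indicator hmeas]
        exact lintegral_congr hind
    _ ≤ ∫⁻ ζ in (Metric.ball (0:ℂ) R)ᶜ,
          ENNReal.ofReal (((a^2)⁻¹)^q) * (ENNReal.ofReal ((‖ζ‖^2)⁻¹))^q := by
        refine setLIntegral_mono_ae' hmeas (Eventually.of_forall fun ζ hζ => ?_)
        have hz : 0 < ‖ζ‖ := by
          have := haz ζ hζ
          simp only [Set.mem_compl_iff, Metric.mem_ball, dist_zero_right, not_lt] at hζ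
          linarith
        have h1 : (‖((ζ - z)^2)⁻¹‖₊ : ℝ≥0∞) = ENNReal.ofReal ((‖ζ - z‖^2)⁻¹) := by
          rw [show (‖((ζ - z)^2)⁻¹‖₊ : ℝ≥0∞) = ENNReal.ofReal ‖((ζ - z)^2)⁻¹‖ from (ofReal_norm _).symm, norm_inv, norm_pow]
        have h2 : (‖ζ - z‖^2)⁻¹ ≤ (a^2)⁻¹ * (‖ζ‖^2)⁻¹ := by
          have h3 := haz ζ hζ
          have h4 : (a * ‖ζ‖)^2 ≤ ‖ζ - z‖^2 :=
            pow_le_pow_left₀ (by positivity) h3 2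
          have h5 : 0 < (a * ‖ζ‖)^2 := by positivity
          calc (‖ζ - z‖^2)⁻¹ ≤ ((a * ‖ζ‖)^2)⁻¹ := by
                exact inv_anti₀ h5 h4
            _ = (a^2)⁻¹ * (‖ζ‖^2)⁻¹ := by rw [mul_pow, mul_inv]
        calc ((‖((ζ - z)^2)⁻¹‖₊ : ℝ≥0∞))^q
            = (ENNReal.ofReal ((‖ζ - z‖^2)⁻¹))^q := by rw [h1]
          _ ≤ (ENNReal.ofReal ((a^2)⁻¹ * (‖ζ‖^2)⁻¹))^q :=
              ENNReal.rpow_le_rpow (ENNReal.ofReal_le_ofReal h2) hq0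
          _ = (ENNReal.ofReal ((a^2)⁻¹) * ENNReal.ofReal ((‖ζ‖^2)⁻¹))^q := by
              rw [ENNReal.ofReal_mul (by positivity)]
          _ = ENNReal.ofReal (((a^2)⁻¹)^q) * (ENNReal.ofReal ((‖ζ‖^2)⁻¹))^q := by
              rw [ENNReal.mul_rpow_of_nonneg _ _ hq0,
                ENNReal.ofReal_rpow_of_nonneg (by positivity) hq0]
    _ = ENNReal.ofReal (((a^2)⁻¹)^q) * tailInt q R := by
        rw [tailInt, lintegral_const_mul' _ _ ENNReal.ofReal_ne_top]

end BeurlingAux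

namespace BeurlingAux

lemma tailInt_le_expbound {q : ℝ} (hq : 1 < q) :
    tailInt q 1 ≤ ENNReal.ofReal (4^q) * ∫⁻ ζ : ℂ, ENNReal.ofReal ((1 + ‖ζ‖) ^ (-(2*q))) := by
  rw [tailInt]
  have hstep : ∀ ζ : ℂ, ζ ∈ (Metric.ball (0:ℂ) 1)ᶜ →
      (ENNReal.ofReal ((‖ζ‖^2)⁻¹))^q
        ≤ ENNReal.ofReal (4^q) * ENNReal.ofReal ((1 + ‖ζ‖) ^ (-(2*q))) := by
    intro ζ hζ
    have h1 : (1:ℝ) ≤ ‖ζ‖ := by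
      simpa [Metric.mem_ball, dist_zero_right] using hζ
    have hx : (0:ℝ) < 1 + ‖ζ‖ := by linarith
    have hpos2 : (0:ℝ) < ‖ζ‖^2 := by positivity
    have hpos : (0:ℝ) < (1+‖ζ‖)^2 := by positivity
    have h2 : (‖ζ‖^2)⁻¹ ≤ 4 * ((1+‖ζ‖)^2)⁻¹ := by
      have hd := (div_le_div_iff₀ hpos2 hpos).2 (by nlinarith : 1*(1+‖ζ‖)^2 ≤ 4*‖ζ‖^2)
      rw [one_div, div_eq_mul_inv] at hd
      exact hd
    have h3 : ((‖ζ‖^2)⁻¹)^q ≤ (4 * ((1+‖ζ‖)^2)⁻¹)^q :=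
      Real.rpow_le_rpow (by positivity) h2 (by linarith)
    have h4 : (4 * ((1+‖ζ‖)^2)⁻¹)^q = 4^q * (1+‖ζ‖)^(-(2*q)) := by
      rw [Real.mul_rpow (by norm_num) (by positivity)]
      congr 1
      have h5 : ((1+‖ζ‖)^2)⁻¹ = (1+‖ζ‖)^(-(2:ℝ)) := by
        rw [Real.rpow_neg hx.le, ← Real.rpow_natCast (1+‖ζ‖) 2]
        norm_num
      rw [h5, ← Real.rpow_mul hx.le]
      ring_nf
    calc (ENNReal.ofReal ((‖ζ‖^2)⁻¹))^q
        = ENNReal.ofReal (((‖ζ‖^2)⁻¹)^q) :=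
          ENNReal.ofReal_rpow_of_nonneg (by positivity) (by linarith)
      _ ≤ ENNReal.ofReal (4^q * (1+‖ζ‖)^(-(2*q))) := ENNReal.ofReal_le_ofReal (h4 ▸ h3)
      _ = ENNReal.ofReal (4^q) * ENNReal.ofReal ((1+‖ζ‖)^(-(2*q))) :=
          ENNReal.ofReal_mul (by positivity)
  calc ∫⁻ ζ in (Metric.ball (0:ℂ) 1)ᶜ, (ENNReal.ofReal ((‖ζ‖^2)⁻¹))^q
      ≤ ∫⁻ ζ in (Metric.ball (0:ℂ) 1)ᶜ,
          ENNReal.ofReal (4^q) * ENNReal.ofReal ((1+‖ζ‖)^(-(2*q))) :=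
        setLIntegral_mono_ae' measurableSet_ball.compl (Eventually.of_forall hstep)
    _ ≤ ∫⁻ ζ : ℂ, ENNReal.ofReal (4^q) * ENNReal.ofReal ((1+‖ζ‖)^(-(2*q))) :=
        setLIntegral_le_lintegral _ _
    _ = ENNReal.ofReal (4^q) * ∫⁻ ζ : ℂ, ENNReal.ofReal ((1+‖ζ‖)^(-(2*q))) :=
        lintegral_const_mul' _ _ ENNReal.ofReal_ne_top

lemma tailInt_lt_top {q R : ℝ} (hq : 1 < q) (hR : 1 ≤ R) : tailInt q R < ∞ := by
  have hmono : tailInt q R ≤ tailInt q 1 :=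
    lintegral_mono_set (Set.compl_subset_compl.2 (Metric.ball_subset_ball hR))
  refine lt_of_le_of_lt (hmono.trans (tailInt_le_expbound hq)) ?_
  have hfin : (∫⁻ ζ : ℂ, ENNReal.ofReal ((1 + ‖ζ‖) ^ (-(2*q)))) < ∞ := by
    apply finite_integral_one_add_norm
    rw [Complex.finrank_real_complex]
    norm_num
    linarith
  exact ENNReal.mul_lt_top ENNReal.ofReal_lt_top hfin

lemma tailInt_tendsto {q : ℝ} (hq : 1 < q) :
    Tendsto (fun n : ℕ => tailInt q ((n:ℝ)+1)) atTop (𝓝 0) := by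
  have hw : Measurable fun ζ : ℂ => (ENNReal.ofReal ((‖ζ‖^2)⁻¹))^q := by
    exact (ENNReal.measurable_ofReal.comp ((measurable_norm.pow_const 2).inv)).pow_const q
  have key := tendsto_lintegral_of_dominated_convergence
    (F := fun (n : ℕ) ζ => ((Metric.ball (0:ℂ) ((n:ℝ)+1))ᶜ).indicator
      (fun ζ => (ENNReal.ofReal ((‖ζ‖^2)⁻¹))^q) ζ)
    (f := fun _ => 0)
    (bound := fun ζ => ((Metric.ball (0:ℂ) 1)ᶜ).indicator
      (fun ζ => (ENNReal.ofReal ((‖ζ‖^2)⁻¹))^q) ζ)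
    (fun n => hw.indicator measurableSet_ball.compl)
    (fun n => Eventually.of_forall fun ζ =>
      Set.indicator_le_indicator_of_subset
        (Set.compl_subset_compl.2 (Metric.ball_subset_ball (by norm_num : (1:ℝ) ≤ (n:ℝ)+1)))
        (fun _ => zero_le) ζ)
    (by
      rw [lintegral_indicator measurableSet_ball.compl]
      exact (tailInt_lt_top hq le_rfl).ne)
    (Eventually.of_forall fun ζ => by
      apply tendsto_atTop_of_eventually_const (i₀ := ⌈‖ζ‖⌉₊)
      intro n hn
      apply Set.indicator_of_notMem
      simp only [Set.mem_compl_iff, Metric.mem_ball, dist_zero_right, not_lt, not_le, not_not]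
      have : ‖ζ‖ ≤ (n:ℝ) := le_trans (Nat.le_ceil _) (by exact_mod_cast hn)
      linarith)
  rw [lintegral_zero] at key
  apply key.congr
  intro n
  rw [lintegral_indicator measurableSet_ball.compl]
  rfl

end BeurlingAux

namespace BeurlingAux

lemma eLpNorm_ofReal_eq {p : ℝ} (hp : 0 < p) (f : ℂ → ℂ) (μ : Measure ℂ) :
    eLpNorm f (ENNReal.ofReal p) μ = (∫⁻ z, (‖f z‖₊ : ℝ≥0∞)^p ∂μ)^(1/p) := by
  rw [eLpNorm_eq_lintegral_rpow_enorm_toReal (by simp [hp] : ENNReal.ofReal p ≠ 0)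
    ENNReal.ofReal_ne_top, ENNReal.toReal_ofReal hp.le]
  rfl

lemma holder_tail {p q : ℝ} (hpq : p.HolderConjugate q) {φ : ℂ → ℂ}
    (hφm : AEStronglyMeasurable φ volume) {R a : ℝ} (hR : 0 < R) (ha : 0 < a) {z : ℂ}
    (haz : ∀ ζ : ℂ, ζ ∈ (Metric.ball (0:ℂ) R)ᶜ → a * ‖ζ‖ ≤ ‖ζ - z‖) :
    ∫⁻ ζ, (‖((Metric.ball (0:ℂ) R)ᶜ.indicator φ) ζ * ((ζ - z)^2)⁻¹‖₊ : ℝ≥0∞)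
      ≤ eLpNorm φ (ENNReal.ofReal p) volume *
        (ENNReal.ofReal (((a^2)⁻¹)^q) * tailInt q R)^(1/q) := by
  set g : ℂ → ℝ≥0∞ := ((Metric.ball (0:ℂ) R)ᶜ).indicator
    (fun ζ => (‖((ζ - z)^2)⁻¹‖₊ : ℝ≥0∞)) with hg
  have hpt : ∀ ζ : ℂ, (‖((Metric.ball (0:ℂ) R)ᶜ.indicator φ) ζ * ((ζ - z)^2)⁻¹‖₊ : ℝ≥0∞)
      = ((fun ζ => (‖φ ζ‖₊ : ℝ≥0∞)) * g) ζ := by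
    intro ζ
    by_cases hζ : ζ ∈ (Metric.ball (0:ℂ) R)ᶜ
    · simp only [Pi.mul_apply, hg, Set.indicator_of_mem hζ, nnnorm_mul, ENNReal.coe_mul]
    · simp only [Pi.mul_apply, hg, Set.indicator_of_notMem hζ, zero_mul, mul_zero,
        nnnorm_zero, ENNReal.coe_zero]
  rw [lintegral_congr hpt]
  have hk : Measurable fun ζ : ℂ => (‖((ζ - z)^2)⁻¹‖₊ : ℝ≥0∞) := by
    have h1 : Measurable fun ζ : ℂ => ((ζ - z)^2)⁻¹ :=
      ((measurable_id.sub measurable_const).pow_const 2).inv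
    exact h1.enorm
  have hgm : AEMeasurable g volume :=
    (hk.indicator measurableSet_ball.compl).aemeasurable
  have hold := ENNReal.lintegral_mul_le_Lp_mul_Lq volume hpq hφm.enorm hgm
  refine hold.trans (mul_le_mul' ?_ ?_)
  · rw [eLpNorm_ofReal_eq hpq.pos φ volume]
    exact le_rfl
  · exact ENNReal.rpow_le_rpow (tail_kernel_bound hpq.symm.lt hR ha haz)
      (le_of_lt (by have := hpq.symm.pos; positivity))

end BeurlingAux

namespace BeurlingAux

lemma kernel_meas (z : ℂ) : Measurable fun ζ : ℂ => ((ζ - z)^2)⁻¹ :=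
  ((measurable_id.sub measurable_const).pow_const 2).inv

lemma sball_meas (z : ℂ) (ε : ℝ) : MeasurableSet {ζ : ℂ | ε < dist ζ z} :=
  measurableSet_lt measurable_const (measurable_id.dist measurable_const)

lemma tail_integrable {p q : ℝ} (hpq : p.HolderConjugate q) {φ : ℂ → ℂ}
    (hφ : MemLp φ (ENNReal.ofReal p) volume) {R a : ℝ} (hR : 1 ≤ R) (ha : 0 < a) {z : ℂ}
    (haz : ∀ ζ : ℂ, ζ ∈ (Metric.ball (0:ℂ) R)ᶜ → a * ‖ζ‖ ≤ ‖ζ - z‖) :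
    Integrable (fun ζ => ((Metric.ball (0:ℂ) R)ᶜ.indicator φ) ζ * ((ζ - z)^2)⁻¹) volume := by
  constructor
  · exact (hφ.1.indicator measurableSet_ball.compl).mul
      ((kernel_meas z).aestronglyMeasurable)
  · rw [hasFiniteIntegral_def]
    refine lt_of_le_of_lt (holder_tail hpq hφ.1 (by linarith) ha haz) ?_
    refine ENNReal.mul_lt_top hφ.2 ?_
    refine ENNReal.rpow_lt_top_of_nonneg (by have := hpq.symm.pos; positivity) ?_
    exact (ENNReal.mul_lt_top ENNReal.ofReal_lt_top (tailInt_lt_top hpq.symm.lt hR)).ne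

lemma ball_integrable {p : ℝ} (hp : 1 < p) {φ : ℂ → ℂ}
    (hφ : MemLp φ (ENNReal.ofReal p) volume) {R : ℝ} (z : ℂ) {ε : ℝ} (hε : 0 < ε) :
    IntegrableOn (fun ζ => ((Metric.ball (0:ℂ) R).indicator φ) ζ * ((ζ - z)^2)⁻¹)
      {ζ : ℂ | ε < dist ζ z} volume := by
  haveI : IsFiniteMeasure (volume.restrict (Metric.ball (0:ℂ) R)) :=
    ⟨by rw [Measure.restrict_apply_univ]; exact measure_ball_lt_top⟩
  have hint : Integrable ((Metric.ball (0:ℂ) R).indicator φ) volume := by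
    rw [integrable_indicator_iff measurableSet_ball]
    exact (hφ.restrict _).integrable (by
      rw [← ENNReal.ofReal_one]; exact ENNReal.ofReal_le_ofReal hp.le)
  have hdom : Integrable (fun ζ => (ε^2)⁻¹ * ‖(Metric.ball (0:ℂ) R).indicator φ ζ‖)
      (volume.restrict {ζ : ℂ | ε < dist ζ z}) :=
    Integrable.restrict (hint.norm.const_mul ((ε^2)⁻¹))
  have haesm : AEStronglyMeasurable
      (fun ζ => ((Metric.ball (0:ℂ) R).indicator φ) ζ * ((ζ - z)^2)⁻¹)
      (volume.restrict {ζ : ℂ | ε < dist ζ z}) :=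
    ((hφ.1.indicator measurableSet_ball).mul
      ((kernel_meas z).aestronglyMeasurable)).restrict
  refine Integrable.mono' hdom haesm ?_
  refine (ae_restrict_mem (sball_meas z ε)).mono fun ζ hζ => ?_
  have hζ' : ε < ‖ζ - z‖ := by rwa [← dist_eq_norm]
  rw [norm_mul]
  have h1 : ‖((ζ - z)^2)⁻¹‖ ≤ (ε^2)⁻¹ := by
    rw [norm_inv, norm_pow]
    exact inv_anti₀ (by positivity) (by nlinarith)
  calc ‖(Metric.ball (0:ℂ) R).indicator φ ζ‖ * ‖((ζ - z)^2)⁻¹‖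
      ≤ ‖(Metric.ball (0:ℂ) R).indicator φ ζ‖ * (ε^2)⁻¹ :=
        mul_le_mul_of_nonneg_left h1 (norm_nonneg _)
    _ = (ε^2)⁻¹ * ‖(Metric.ball (0:ℂ) R).indicator φ ζ‖ := mul_comm _ _

lemma split_pv {p q : ℝ} (hp : 1 < p) (hpq : p.HolderConjugate q) {φ Kφ KφR : ℂ → ℂ}
    (hφ : MemLp φ (ENNReal.ofReal p) volume)
    {R : ℝ} (hR : 1 ≤ R)
    (hpv : ∀ᵐ z : ℂ, Tendsto (fun ε : ℝ => (1 / (Real.pi : ℂ)) *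
        ∫ ζ in {ζ : ℂ | ε < dist ζ z}, φ ζ / (ζ - z) ^ 2) (𝓝[>] (0:ℝ)) (𝓝 (Kφ z)))
    (hpvR : ∀ᵐ z : ℂ, Tendsto (fun ε : ℝ => (1 / (Real.pi : ℂ)) *
        ∫ ζ in {ζ : ℂ | ε < dist ζ z},
          (Metric.ball (0:ℂ) R).indicator φ ζ / (ζ - z) ^ 2)
        (𝓝[>] (0:ℝ)) (𝓝 (KφR z))) :
    ∀ᵐ z ∂(volume.restrict (Metric.ball (0:ℂ) R)), Kφ z = KφR z + (1 / (Real.pi : ℂ)) *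
      ∫ ζ, ((Metric.ball (0:ℂ) R)ᶜ.indicator φ) ζ * ((ζ - z)^2)⁻¹ := by
  filter_upwards [ae_restrict_of_ae hpv, ae_restrict_of_ae hpvR,
    ae_restrict_mem measurableSet_ball] with z h1 h2 hz
  set B := Metric.ball (0:ℂ) R with hB
  have hzR : ‖z‖ < R := by rwa [mem_ball_zero_iff] at hz
  have hR0 : (0:ℝ) < R := by linarith
  have ha : (0:ℝ) < (R - ‖z‖)/R := div_pos (by linarith) hR0
  have haz : ∀ ζ : ℂ, ζ ∈ Bᶜ → ((R - ‖z‖)/R) * ‖ζ‖ ≤ ‖ζ - z‖ := by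
    intro ζ hζ
    have hζR : R ≤ ‖ζ‖ := by
      simpa [hB, Metric.mem_ball, dist_zero_right] using hζ
    have h3 : ‖ζ‖ - ‖z‖ ≤ ‖ζ - z‖ := norm_sub_norm_le ζ z
    rw [div_mul_eq_mul_div, div_le_iff₀ hR0]
    nlinarith [norm_nonneg z]
  set T : ℂ := ∫ ζ, (Bᶜ.indicator φ) ζ * ((ζ - z)^2)⁻¹ with hT
  have htail := tail_integrable hpq hφ hR ha haz
  have hmem : Set.Ioo (0:ℝ) (R - ‖z‖) ∈ 𝓝[>] (0:ℝ) :=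
    Ioo_mem_nhdsGT_of_mem ⟨le_refl 0, by linarith⟩
  have hev : ∀ᶠ ε in 𝓝[>] (0:ℝ),
      (1 / (Real.pi : ℂ)) * ∫ ζ in {ζ : ℂ | ε < dist ζ z}, φ ζ / (ζ - z) ^ 2
      = ((1 / (Real.pi : ℂ)) *
          ∫ ζ in {ζ : ℂ | ε < dist ζ z}, B.indicator φ ζ / (ζ - z) ^ 2)
        + (1 / (Real.pi : ℂ)) * T := by
    filter_upwards [hmem] with ε hε
    have hε0 : 0 < ε := hε.1
    have hsub : Bᶜ ⊆ {ζ : ℂ | ε < dist ζ z} := by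
      intro ζ hζ
      have hζR : R ≤ ‖ζ‖ := by
        simpa [hB, Metric.mem_ball, dist_zero_right] using hζ
      have h3 : ‖ζ‖ - ‖z‖ ≤ ‖ζ - z‖ := norm_sub_norm_le ζ z
      show ε < dist ζ z
      rw [dist_eq_norm]
      linarith [hε.2]
    have hsplit : ∀ ζ : ℂ, φ ζ / (ζ - z) ^ 2
        = B.indicator φ ζ * ((ζ - z)^2)⁻¹ + (Bᶜ.indicator φ) ζ * ((ζ - z)^2)⁻¹ := by
      intro ζ
      rw [div_eq_mul_inv, ← add_mul]
      congr 1
      exact (congrFun (Set.indicator_self_add_compl B φ) ζ).symm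
    have hIadd : ∫ ζ in {ζ : ℂ | ε < dist ζ z}, φ ζ / (ζ - z) ^ 2
        = (∫ ζ in {ζ : ℂ | ε < dist ζ z}, B.indicator φ ζ * ((ζ - z)^2)⁻¹)
          + ∫ ζ in {ζ : ℂ | ε < dist ζ z}, (Bᶜ.indicator φ) ζ * ((ζ - z)^2)⁻¹ := by
      rw [setIntegral_congr_ae (sball_meas z ε)
        (Eventually.of_forall fun ζ _ => hsplit ζ)]
      exact integral_add (ball_integrable hp hφ z hε0) htail.integrableOn
    have hTail2 : ∫ ζ in {ζ : ℂ | ε < dist ζ z}, (Bᶜ.indicator φ) ζ * ((ζ - z)^2)⁻¹ = T := by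
      rw [hT]
      apply setIntegral_eq_integral_of_forall_compl_eq_zero
      intro ζ hζ
      have : ζ ∉ Bᶜ := fun hc => hζ (hsub hc)
      rw [Set.indicator_of_notMem this, zero_mul]
    have hdiv : ∀ ζ : ℂ, B.indicator φ ζ * ((ζ - z)^2)⁻¹
        = B.indicator φ ζ / (ζ - z) ^ 2 := fun ζ => (div_eq_mul_inv _ _).symm
    have hIdiv : ∫ ζ in {ζ : ℂ | ε < dist ζ z}, B.indicator φ ζ * ((ζ - z)^2)⁻¹
        = ∫ ζ in {ζ : ℂ | ε < dist ζ z}, B.indicator φ ζ / (ζ - z) ^ 2 :=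
      setIntegral_congr_ae (sball_meas z ε) (Eventually.of_forall fun ζ _ => hdiv ζ)
    rw [hIadd, hTail2, hIdiv, mul_add]
  have h2' : Tendsto (fun ε : ℝ => ((1 / (Real.pi : ℂ)) *
      ∫ ζ in {ζ : ℂ | ε < dist ζ z}, B.indicator φ ζ / (ζ - z) ^ 2)
        + (1 / (Real.pi : ℂ)) * T) (𝓝[>] (0:ℝ)) (𝓝 (KφR z + (1 / (Real.pi : ℂ)) * T)) :=
    h2.add_const _
  exact tendsto_nhds_unique (h1.congr' hev) h2'

end BeurlingAux

namespace BeurlingAux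

lemma norm_R_mul {R : ℝ} (hR : 0 < R) (z : ℂ) : ‖(R:ℂ) * z‖ = R * ‖z‖ := by
  rw [norm_mul, Complex.norm_real, Real.norm_eq_abs, abs_of_pos hR]

lemma scale_pv_eq {φ fR g : ℂ → ℂ} {R : ℝ} (hR : 0 < R)
    (h1 : ∀ᵐ z ∂(volume.restrict unitDisk), Tendsto (fun ε : ℝ => (1 / (Real.pi : ℂ)) *
        ∫ ζ in unitDisk ∩ {ζ : ℂ | ε < dist ζ z}, φ ((R:ℂ)*ζ) / (ζ - z) ^ 2)
        (𝓝[>] (0:ℝ)) (𝓝 (g z)))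
    (h2 : ∀ᵐ w : ℂ, Tendsto (fun ε : ℝ => (1 / (Real.pi : ℂ)) *
        ∫ ζ in {ζ : ℂ | ε < dist ζ w},
          (Metric.ball (0:ℂ) R).indicator φ ζ / (ζ - w) ^ 2)
        (𝓝[>] (0:ℝ)) (𝓝 (fR w))) :
    ∀ᵐ z ∂(volume.restrict unitDisk), g z = fR ((R:ℂ)*z) := by
  have hR2 : ((R:ℂ))^2 ≠ 0 := pow_ne_zero 2 (by exact_mod_cast hR.ne')
  have hUm : MeasurableSet unitDisk := measurableSet_ball
  filter_upwards [h1, ae_restrict_of_ae (ae_scale h2 hR)] with z h1z h2z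
  have hcomp : Tendsto (fun ε : ℝ => R * ε) (𝓝[>] (0:ℝ)) (𝓝[>] (0:ℝ)) := by
    apply tendsto_nhdsWithin_of_tendsto_nhds_of_eventually_within
    · have := (continuous_mul_left R).tendsto (0:ℝ)
      rw [mul_zero] at this
      exact this.mono_left nhdsWithin_le_nhds
    · filter_upwards [self_mem_nhdsWithin] with ε hε
      exact mul_pos hR hε
  have h2' := h2z.comp hcomp
  refine tendsto_nhds_unique (h1z.congr' ?_) h2'
  filter_upwards [self_mem_nhdsWithin] with ε hε
  have hεpos : 0 < ε := hε
  show (1 / (Real.pi : ℂ)) * ∫ ζ in unitDisk ∩ {ζ : ℂ | ε < dist ζ z},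
      φ ((R:ℂ)*ζ) / (ζ - z) ^ 2
    = (1 / (Real.pi : ℂ)) * ∫ ζ in {ζ : ℂ | R*ε < dist ζ ((R:ℂ)*z)},
      (Metric.ball (0:ℂ) R).indicator φ ζ / (ζ - (R:ℂ)*z) ^ 2
  congr 1
  set w : ℂ := (R:ℂ)*z with hw
  set Sbig : Set ℂ := Metric.ball (0:ℂ) R ∩ {η : ℂ | R*ε < dist η w} with hSbig
  have hSbigm : MeasurableSet Sbig :=
    measurableSet_ball.inter (sball_meas w (R*ε))
  set f : ℂ → ℂ := Sbig.indicator (fun η => φ η * ((η - w)^2)⁻¹ * ((R:ℂ)^2)) with hf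
  have hmemiff : ∀ ζ : ℂ, ((R:ℂ)*ζ ∈ Sbig) ↔ ζ ∈ unitDisk ∩ {ζ : ℂ | ε < dist ζ z} := by
    intro ζ
    have e1 : ((R:ℂ)*ζ ∈ Metric.ball (0:ℂ) R) ↔ ζ ∈ unitDisk := by
      rw [Metric.mem_ball, dist_zero_right, norm_R_mul hR ζ,
        show (ζ ∈ unitDisk) ↔ (ζ ∈ Metric.ball (0:ℂ) 1) from Iff.rfl, Metric.mem_ball,
        dist_zero_right]
      constructor <;> intro h <;> nlinarith [norm_nonneg ζ]
    have e2 : (R * ε < dist ((R:ℂ)*ζ) w) ↔ ε < dist ζ z := by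
      rw [dist_eq_norm, hw, ← mul_sub, norm_R_mul hR (ζ - z), dist_eq_norm]
      constructor <;> intro h <;> nlinarith [norm_nonneg (ζ - z)]
    rw [hSbig]
    simp only [Set.mem_inter_iff, Set.mem_setOf_eq]
    rw [e1, e2]
  have hpt : ∀ ζ : ℂ, f ((R:ℂ)*ζ)
      = (unitDisk ∩ {ζ : ℂ | ε < dist ζ z}).indicator
          (fun ζ => φ ((R:ℂ)*ζ) * ((ζ - z)^2)⁻¹) ζ := by
    intro ζ
    by_cases hζ : ζ ∈ unitDisk ∩ {ζ : ℂ | ε < dist ζ z}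
    · rw [Set.indicator_of_mem hζ, hf, Set.indicator_of_mem ((hmemiff ζ).2 hζ)]
      have hsub : (R:ℂ)*ζ - w = (R:ℂ) * (ζ - z) := by rw [hw, mul_sub]
      have hval : (((R:ℂ)*(ζ - z))^2)⁻¹ * (R:ℂ)^2 = ((ζ - z)^2)⁻¹ := by
        rw [mul_pow, mul_inv, mul_comm (((R:ℂ)^2)⁻¹), mul_assoc,
          inv_mul_cancel₀ hR2, mul_one]
      rw [hsub, mul_assoc, hval]
    · rw [Set.indicator_of_notMem hζ, hf,
        Set.indicator_of_notMem (fun hc => hζ ((hmemiff ζ).1 hc))]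
  have hSm : MeasurableSet (unitDisk ∩ {ζ : ℂ | ε < dist ζ z}) := hUm.inter (sball_meas z ε)
  calc ∫ ζ in unitDisk ∩ {ζ : ℂ | ε < dist ζ z}, φ ((R:ℂ)*ζ) / (ζ - z) ^ 2
      = ∫ ζ in unitDisk ∩ {ζ : ℂ | ε < dist ζ z}, φ ((R:ℂ)*ζ) * ((ζ - z)^2)⁻¹ :=
        setIntegral_congr_ae hSm
          (Eventually.of_forall fun ζ _ => div_eq_mul_inv _ _)
    _ = ∫ ζ : ℂ, f ((R:ℂ)*ζ) := by
        rw [← integral_indicator hSm]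
        exact (integral_congr_ae (Eventually.of_forall hpt)).symm
    _ = ((R^2)⁻¹ : ℝ) • ∫ η : ℂ, f η := by
        have hcs := MeasureTheory.Measure.integral_comp_smul (volume : Measure ℂ) f R
        rw [Complex.finrank_real_complex,
          _root_.abs_of_nonneg (by positivity : (0:ℝ) ≤ (R^2)⁻¹)] at hcs
        rw [← hcs]
        apply integral_congr_ae
        filter_upwards with ζ
        rw [Complex.real_smul]
    _ = ((R^2)⁻¹ : ℝ) • ((∫ η in Sbig, φ η * ((η - w)^2)⁻¹) * (R:ℂ)^2) := by
        rw [hf, integral_indicator hSbigm, integral_mul_const]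
    _ = ∫ η in Sbig, φ η * ((η - w)^2)⁻¹ := by
        rw [Complex.real_smul]
        push_cast
        rw [mul_comm (∫ η in Sbig, φ η * ((η - w)^2)⁻¹), ← mul_assoc,
          inv_mul_cancel₀ hR2, one_mul]
    _ = ∫ ζ in {ζ : ℂ | R*ε < dist ζ w},
          (Metric.ball (0:ℂ) R).indicator φ ζ / (ζ - w) ^ 2 := by
        have hind : ∀ ζ : ℂ, (Metric.ball (0:ℂ) R).indicator φ ζ / (ζ - w)^2
            = (Metric.ball (0:ℂ) R).indicator (fun ζ => φ ζ * ((ζ - w)^2)⁻¹) ζ := by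
          intro ζ
          by_cases hζ : ζ ∈ Metric.ball (0:ℂ) R
          · rw [Set.indicator_of_mem hζ, Set.indicator_of_mem hζ, div_eq_mul_inv]
          · rw [Set.indicator_of_notMem hζ, Set.indicator_of_notMem hζ, zero_div]
        have hlast : ∫ ζ in {ζ : ℂ | R*ε < dist ζ w},
            (Metric.ball (0:ℂ) R).indicator φ ζ / (ζ - w)^2
            = ∫ η in Sbig, φ η * ((η - w)^2)⁻¹ := by
          calc ∫ ζ in {ζ : ℂ | R*ε < dist ζ w},
              (Metric.ball (0:ℂ) R).indicator φ ζ / (ζ - w)^2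
              = ∫ ζ in {ζ : ℂ | R*ε < dist ζ w},
                  (Metric.ball (0:ℂ) R).indicator (fun ζ => φ ζ * ((ζ - w)^2)⁻¹) ζ :=
                setIntegral_congr_ae (sball_meas w (R*ε))
                  (Eventually.of_forall fun ζ _ => hind ζ)
            _ = ∫ ζ in {ζ : ℂ | R*ε < dist ζ w} ∩ Metric.ball (0:ℂ) R,
                  φ ζ * ((ζ - w)^2)⁻¹ := setIntegral_indicator measurableSet_ball
            _ = ∫ η in Sbig, φ η * ((η - w)^2)⁻¹ := by rw [hSbig, Set.inter_comm]
        exact hlast.symm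

end BeurlingAux

namespace BeurlingAux

lemma qmp_mul {R : ℝ} (hR : 0 < R) :
    Measure.QuasiMeasurePreserving (fun z : ℂ => (R:ℂ) * z) volume volume := by
  have h := Measure.quasiMeasurePreserving_smul (volume : Measure ℂ) (ne_of_gt hR)
  have heq : (fun z : ℂ => R • z) = fun z : ℂ => (R : ℂ) * z := by
    funext z; exact Complex.real_smul
  rwa [heq] at h

lemma scaled_bound {p : ℝ} (hp : 1 < p) {K Kz : (ℂ → ℂ) → (ℂ → ℂ)}
    (hK_pv : ∀ φ : ℂ → ℂ, MemLp φ (ENNReal.ofReal p) volume →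
      ∀ᵐ z : ℂ, Tendsto
        (fun ε : ℝ => (1 / (Real.pi : ℂ)) *
          ∫ ζ in {ζ : ℂ | ε < dist ζ z}, φ ζ / (ζ - z) ^ 2)
        (𝓝[>] (0:ℝ)) (𝓝 (K φ z)))
    (hKz_pv : ∀ φ : ℂ → ℂ, MemLp φ (ENNReal.ofReal p) (volume.restrict unitDisk) →
      ∀ᵐ z ∂(volume.restrict unitDisk), Tendsto
        (fun ε : ℝ => (1 / (Real.pi : ℂ)) *
          ∫ ζ in unitDisk ∩ {ζ : ℂ | ε < dist ζ z}, φ ζ / (ζ - z) ^ 2)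
        (𝓝[>] (0:ℝ)) (𝓝 (Kz φ z)))
    {C' : ℝ} (hC' : ∀ φ : ℂ → ℂ, MemLp φ (ENNReal.ofReal p) (volume.restrict unitDisk) →
      eLpNorm (Kz φ) (ENNReal.ofReal p) (volume.restrict unitDisk) ≤
        ENNReal.ofReal C' * eLpNorm φ (ENNReal.ofReal p) (volume.restrict unitDisk))
    {φ : ℂ → ℂ} (hφ : MemLp φ (ENNReal.ofReal p) volume) {R : ℝ} (hR : 0 < R) :
    eLpNorm (K ((Metric.ball (0:ℂ) R).indicator φ)) (ENNReal.ofReal p)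
        (volume.restrict (Metric.ball (0:ℂ) R))
      ≤ ENNReal.ofReal C' * eLpNorm φ (ENNReal.ofReal p) volume := by
  have hp0 : (0:ℝ) < p := by linarith
  have hP0 : ENNReal.ofReal p ≠ 0 := by simp [hp0]
  have hUm : MeasurableSet unitDisk := measurableSet_ball
  set φR := (Metric.ball (0:ℂ) R).indicator φ with hφRdef
  have hφRLp : MemLp φR (ENNReal.ofReal p) volume := hφ.indicator measurableSet_ball
  set ψ : ℂ → ℂ := fun w => φ ((R:ℂ)*w) with hψdef
  have hψm : AEStronglyMeasurable ψ volume :=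
    hφ.1.comp_quasiMeasurePreserving (qmp_mul hR)
  have hIφ : (∫⁻ w, (‖φ w‖₊ : ℝ≥0∞)^p) < ∞ := by
    have h := lintegral_rpow_enorm_lt_top_of_eLpNorm_lt_top hP0 ENNReal.ofReal_ne_top hφ.2
    rwa [ENNReal.toReal_ofReal hp0.le] at h
  have hφpm : AEMeasurable (fun w : ℂ => (‖φ w‖₊ : ℝ≥0∞)^p) volume :=
    hφ.1.enorm.pow_const p
  have hψscale : (∫⁻ w, (‖ψ w‖₊ : ℝ≥0∞)^p)
      = ENNReal.ofReal ((R^2)⁻¹) * ∫⁻ w, (‖φ w‖₊ : ℝ≥0∞)^p :=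
    lintegral_scale hφpm hR
  have hψLp : MemLp ψ (ENNReal.ofReal p) volume := by
    refine ⟨hψm, ?_⟩
    rw [eLpNorm_ofReal_eq hp0, hψscale]
    exact ENNReal.rpow_lt_top_of_nonneg (by positivity)
      (ENNReal.mul_lt_top ENNReal.ofReal_lt_top hIφ).ne
  have hAe : ∀ᵐ z ∂(volume.restrict unitDisk), Kz ψ z = K φR ((R:ℂ)*z) :=
    scale_pv_eq hR (hKz_pv ψ (hψLp.restrict _)) (hK_pv φR hφRLp)
  have hKAm : AEStronglyMeasurable (K φR) volume := aesm_of_pv hφRLp.1 (hK_pv φR hφRLp)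
  have hbound := hC' ψ (hψLp.restrict _)
  -- rewrite both sides of hbound as scaled lintegrals over ball 0 R
  set c : ℝ≥0∞ := ENNReal.ofReal ((R^2)⁻¹) with hc
  have hc0 : c ≠ 0 := by simp [hc]; positivity
  have hctop : c ≠ ∞ := ENNReal.ofReal_ne_top
  have hmemball : ∀ z : ℂ, ((R:ℂ)*z ∈ Metric.ball (0:ℂ) R) ↔ z ∈ unitDisk := by
    intro z
    rw [Metric.mem_ball, dist_zero_right, norm_R_mul hR z,
      show (z ∈ unitDisk) ↔ (z ∈ Metric.ball (0:ℂ) 1) from Iff.rfl, Metric.mem_ball,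
      dist_zero_right]
    constructor <;> intro h <;> nlinarith [norm_nonneg z]
  have hscale_gen : ∀ u : ℂ → ℂ, AEStronglyMeasurable u volume →
      (∫⁻ z in unitDisk, (‖u ((R:ℂ)*z)‖₊ : ℝ≥0∞)^p)
        = c * ∫⁻ w in Metric.ball (0:ℂ) R, (‖u w‖₊ : ℝ≥0∞)^p := by
    intro u hu
    have hgm : AEMeasurable ((Metric.ball (0:ℂ) R).indicator
        (fun w => (‖u w‖₊ : ℝ≥0∞)^p)) volume :=
      (hu.enorm.pow_const p).indicator measurableSet_ball
    have hpt : ∀ z : ℂ, (Metric.ball (0:ℂ) R).indicator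
        (fun w => (‖u w‖₊ : ℝ≥0∞)^p) ((R:ℂ)*z)
        = unitDisk.indicator (fun z => (‖u ((R:ℂ)*z)‖₊ : ℝ≥0∞)^p) z := by
      intro z
      by_cases hz : z ∈ unitDisk
      · rw [Set.indicator_of_mem hz, Set.indicator_of_mem ((hmemball z).2 hz)]
      · rw [Set.indicator_of_notMem hz,
          Set.indicator_of_notMem (fun hc' => hz ((hmemball z).1 hc'))]
    calc ∫⁻ z in unitDisk, (‖u ((R:ℂ)*z)‖₊ : ℝ≥0∞)^p
        = ∫⁻ z, unitDisk.indicator (fun z => (‖u ((R:ℂ)*z)‖₊ : ℝ≥0∞)^p) z :=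
          (lintegral_indicator hUm _).symm
      _ = ∫⁻ z, (Metric.ball (0:ℂ) R).indicator
            (fun w => (‖u w‖₊ : ℝ≥0∞)^p) ((R:ℂ)*z) := by
          exact lintegral_congr fun z => (hpt z).symm
      _ = c * ∫⁻ w, (Metric.ball (0:ℂ) R).indicator
            (fun w => (‖u w‖₊ : ℝ≥0∞)^p) w := lintegral_scale hgm hR
      _ = c * ∫⁻ w in Metric.ball (0:ℂ) R, (‖u w‖₊ : ℝ≥0∞)^p := by
          rw [lintegral_indicator measurableSet_ball]
  have hLHS : eLpNorm (Kz ψ) (ENNReal.ofReal p) (volume.restrict unitDisk)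
      = (c * ∫⁻ w in Metric.ball (0:ℂ) R, (‖K φR w‖₊ : ℝ≥0∞)^p)^(1/p) := by
    rw [eLpNorm_congr_ae hAe, eLpNorm_ofReal_eq hp0, hscale_gen (K φR) hKAm]
  have hRHS : eLpNorm ψ (ENNReal.ofReal p) (volume.restrict unitDisk)
      = (c * ∫⁻ w in Metric.ball (0:ℂ) R, (‖φ w‖₊ : ℝ≥0∞)^p)^(1/p) := by
    rw [eLpNorm_ofReal_eq hp0, hscale_gen φ hφ.1]
  rw [hLHS, hRHS] at hbound
  have hcp0 : c^(1/p) ≠ 0 := by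
    simp only [ne_eq, ENNReal.rpow_eq_zero_iff, not_or]
    constructor
    · rintro ⟨h1, _⟩; exact hc0 h1
    · rintro ⟨h1, _⟩; exact hctop h1
  have hcptop : c^(1/p) ≠ ∞ := ENNReal.rpow_ne_top_of_nonneg (by positivity) hctop
  have hmulform : ∀ X : ℝ≥0∞, (c * X)^(1/p) = c^(1/p) * X^(1/p) := fun X =>
    ENNReal.mul_rpow_of_nonneg _ _ (by positivity)
  rw [hmulform, hmulform] at hbound
  have hfinal : (∫⁻ w in Metric.ball (0:ℂ) R, (‖K φR w‖₊ : ℝ≥0∞)^p)^(1/p)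
      ≤ ENNReal.ofReal C' * (∫⁻ w in Metric.ball (0:ℂ) R, (‖φ w‖₊ : ℝ≥0∞)^p)^(1/p) := by
    rw [← ENNReal.mul_le_mul_iff_right hcp0 hcptop]
    calc c^(1/p) * (∫⁻ w in Metric.ball (0:ℂ) R, (‖K φR w‖₊ : ℝ≥0∞)^p)^(1/p)
        ≤ ENNReal.ofReal C' *
            (c^(1/p) * (∫⁻ w in Metric.ball (0:ℂ) R, (‖φ w‖₊ : ℝ≥0∞)^p)^(1/p)) := hbound
      _ = c^(1/p) * (ENNReal.ofReal C' *
            (∫⁻ w in Metric.ball (0:ℂ) R, (‖φ w‖₊ : ℝ≥0∞)^p)^(1/p)) := by ring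
  calc eLpNorm (K φR) (ENNReal.ofReal p) (volume.restrict (Metric.ball (0:ℂ) R))
      = (∫⁻ w in Metric.ball (0:ℂ) R, (‖K φR w‖₊ : ℝ≥0∞)^p)^(1/p) :=
        eLpNorm_ofReal_eq hp0 _ _
    _ ≤ ENNReal.ofReal C' * (∫⁻ w in Metric.ball (0:ℂ) R, (‖φ w‖₊ : ℝ≥0∞)^p)^(1/p) := hfinal
    _ ≤ ENNReal.ofReal C' * eLpNorm φ (ENNReal.ofReal p) volume := by
        apply mul_le_mul_right
        rw [eLpNorm_ofReal_eq hp0]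
        apply ENNReal.rpow_le_rpow _ (by positivity)
        exact setLIntegral_le_lintegral _ _
  
end BeurlingAux

namespace BeurlingAux

lemma eLpNorm_le_of_enorm_bound {p : ℝ} (hp0 : 0 < p) {f : ℂ → ℂ} {μ : Measure ℂ}
    {b : ℝ≥0∞} (h : ∀ᵐ z ∂μ, (‖f z‖₊ : ℝ≥0∞) ≤ b) :
    eLpNorm f (ENNReal.ofReal p) μ ≤ b * (μ Set.univ)^(1/p) := by
  rw [eLpNorm_ofReal_eq hp0]
  calc (∫⁻ z, (‖f z‖₊ : ℝ≥0∞)^p ∂μ)^(1/p)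
      ≤ (∫⁻ _z, b^p ∂μ)^(1/p) := by
        apply ENNReal.rpow_le_rpow _ (by positivity)
        exact lintegral_mono_ae (h.mono fun z hz => ENNReal.rpow_le_rpow hz hp0.le)
    _ = (b^p * μ Set.univ)^(1/p) := by rw [lintegral_const]
    _ = b * (μ Set.univ)^(1/p) := by
        rw [ENNReal.mul_rpow_of_nonneg _ _ (by positivity), ← ENNReal.rpow_mul,
          mul_one_div_cancel hp0.ne', ENNReal.rpow_one]

lemma hard_bound {p : ℝ} (hp : 1 < p) {K Kz : (ℂ → ℂ) → (ℂ → ℂ)}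
    (hK_pv : ∀ φ : ℂ → ℂ, MemLp φ (ENNReal.ofReal p) volume →
      ∀ᵐ z : ℂ, Tendsto
        (fun ε : ℝ => (1 / (Real.pi : ℂ)) *
          ∫ ζ in {ζ : ℂ | ε < dist ζ z}, φ ζ / (ζ - z) ^ 2)
        (𝓝[>] (0:ℝ)) (𝓝 (K φ z)))
    (hKz_pv : ∀ φ : ℂ → ℂ, MemLp φ (ENNReal.ofReal p) (volume.restrict unitDisk) →
      ∀ᵐ z ∂(volume.restrict unitDisk), Tendsto
        (fun ε : ℝ => (1 / (Real.pi : ℂ)) *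
          ∫ ζ in unitDisk ∩ {ζ : ℂ | ε < dist ζ z}, φ ζ / (ζ - z) ^ 2)
        (𝓝[>] (0:ℝ)) (𝓝 (Kz φ z)))
    {C' : ℝ} (hC' : ∀ φ : ℂ → ℂ, MemLp φ (ENNReal.ofReal p) (volume.restrict unitDisk) →
      eLpNorm (Kz φ) (ENNReal.ofReal p) (volume.restrict unitDisk) ≤
        ENNReal.ofReal C' * eLpNorm φ (ENNReal.ofReal p) (volume.restrict unitDisk))
    {φ : ℂ → ℂ} (hφ : MemLp φ (ENNReal.ofReal p) volume) :
    eLpNorm (K φ) (ENNReal.ofReal p) volume ≤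
      ENNReal.ofReal C' * eLpNorm φ (ENNReal.ofReal p) volume := by
  have hp0 : (0:ℝ) < p := by linarith
  have hP0 : ENNReal.ofReal p ≠ 0 := by simp [hp0]
  have hP1 : (1:ℝ≥0∞) ≤ ENNReal.ofReal p := by
    rw [← ENNReal.ofReal_one]; exact ENNReal.ofReal_le_ofReal hp.le
  have hpq : p.HolderConjugate (p/(p-1)) := Real.HolderConjugate.conjExponent hp
  set q : ℝ := p/(p-1) with hqdef
  have hq1 : 1 < q := hpq.symm.lt
  have hq0 : (0:ℝ) < q := by linarith
  set N : ℝ≥0∞ := eLpNorm φ (ENNReal.ofReal p) volume with hNdef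
  have hNtop : N ≠ ∞ := hφ.2.ne
  set D : ℝ≥0∞ := ENNReal.ofReal C' * N with hDdef
  have hDtop : D ≠ ∞ := ENNReal.mul_ne_top ENNReal.ofReal_ne_top hNtop
  have hKm : AEStronglyMeasurable (K φ) volume := aesm_of_pv hφ.1 (hK_pv φ hφ)
  -- the bound on every ball
  have key : ∀ S : ℝ, 0 < S →
      eLpNorm (K φ) (ENNReal.ofReal p) (volume.restrict (Metric.ball (0:ℂ) S)) ≤ D := by
    intro S hS
    set V : ℝ≥0∞ := (volume (Metric.ball (0:ℂ) S))^(1/p) with hVdef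
    have hVtop : V ≠ ∞ :=
      ENNReal.rpow_ne_top_of_nonneg (by positivity) measure_ball_lt_top.ne
    set κ : ℝ≥0∞ := ENNReal.ofReal ((((1/2:ℝ)^2)⁻¹)^q) with hκdef
    set β : ℕ → ℝ≥0∞ := fun n => N * (κ * tailInt q ((n:ℝ)+1))^(1/q) with hβdef
    have hstep : ∀ n : ℕ, 2*S ≤ (n:ℝ)+1 →
        eLpNorm (K φ) (ENNReal.ofReal p) (volume.restrict (Metric.ball (0:ℂ) S))
          ≤ D + β n * V := by
      intro n hn
      set R : ℝ := (n:ℝ)+1 with hRdef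
      have hR1 : (1:ℝ) ≤ R := by simp [hRdef]
      have hRpos : (0:ℝ) < R := by linarith
      set φR := (Metric.ball (0:ℂ) R).indicator φ with hφRdef
      have hφRLp : MemLp φR (ENNReal.ofReal p) volume := hφ.indicator measurableSet_ball
      have hsubset : Metric.ball (0:ℂ) S ⊆ Metric.ball (0:ℂ) R :=
        Metric.ball_subset_ball (by linarith)
      have hsplit := split_pv hp hpq hφ hR1 (hK_pv φ hφ) (hK_pv φR hφRLp)
      have hsplitS : ∀ᵐ z ∂(volume.restrict (Metric.ball (0:ℂ) S)),
          K φ z = K φR z + (1 / (Real.pi : ℂ)) *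
            ∫ ζ, ((Metric.ball (0:ℂ) R)ᶜ.indicator φ) ζ * ((ζ - z)^2)⁻¹ :=
        hsplit.filter_mono (ae_mono (Measure.restrict_mono hsubset le_rfl))
      set T : ℂ → ℂ := fun z => (1 / (Real.pi : ℂ)) *
          ∫ ζ, ((Metric.ball (0:ℂ) R)ᶜ.indicator φ) ζ * ((ζ - z)^2)⁻¹ with hTdef
      have hTm : AEStronglyMeasurable T volume := by
        apply AEStronglyMeasurable.const_mul
        exact aesm_kernel_integral (hφ.1.indicator measurableSet_ball.compl)
          ((measurable_id.pow_const 2).inv)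
      have hKRm : AEStronglyMeasurable (K φR) volume :=
        aesm_of_pv hφRLp.1 (hK_pv φR hφRLp)
      have htri : eLpNorm (K φ) (ENNReal.ofReal p) (volume.restrict (Metric.ball (0:ℂ) S))
          ≤ eLpNorm (K φR) (ENNReal.ofReal p) (volume.restrict (Metric.ball (0:ℂ) S))
            + eLpNorm T (ENNReal.ofReal p) (volume.restrict (Metric.ball (0:ℂ) S)) := by
        rw [eLpNorm_congr_ae hsplitS]
        exact eLpNorm_add_le hKRm.restrict hTm.restrict hP1
      have hbd1 : eLpNorm (K φR) (ENNReal.ofReal p)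
          (volume.restrict (Metric.ball (0:ℂ) S)) ≤ D := by
        calc eLpNorm (K φR) (ENNReal.ofReal p) (volume.restrict (Metric.ball (0:ℂ) S))
            ≤ eLpNorm (K φR) (ENNReal.ofReal p) (volume.restrict (Metric.ball (0:ℂ) R)) :=
              eLpNorm_mono_measure _ (Measure.restrict_mono hsubset le_rfl)
          _ ≤ D := scaled_bound hp hK_pv hKz_pv hC' hφ hRpos
      have hbd2 : eLpNorm T (ENNReal.ofReal p)
          (volume.restrict (Metric.ball (0:ℂ) S)) ≤ β n * V := by
        have hptb : ∀ᵐ z ∂(volume.restrict (Metric.ball (0:ℂ) S)),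
            (‖T z‖₊ : ℝ≥0∞) ≤ β n := by
          filter_upwards [ae_restrict_mem measurableSet_ball] with z hz
          have hzS : ‖z‖ < S := mem_ball_zero_iff.1 hz
          have haz : ∀ ζ : ℂ, ζ ∈ (Metric.ball (0:ℂ) R)ᶜ → (1/2) * ‖ζ‖ ≤ ‖ζ - z‖ := by
            intro ζ hζ
            have hζR : R ≤ ‖ζ‖ := by
              simpa [Metric.mem_ball, dist_zero_right] using hζ
            have h3 : ‖ζ‖ - ‖z‖ ≤ ‖ζ - z‖ := norm_sub_norm_le ζ z
            nlinarith
          have hTz : (‖T z‖₊ : ℝ≥0∞)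
              ≤ ∫⁻ ζ, (‖((Metric.ball (0:ℂ) R)ᶜ.indicator φ) ζ * ((ζ - z)^2)⁻¹‖₊ : ℝ≥0∞) := by
            have hsn : (‖T z‖₊ : ℝ≥0∞) = (‖(1 / (Real.pi : ℂ))‖₊ : ℝ≥0∞) *
                (‖∫ ζ, ((Metric.ball (0:ℂ) R)ᶜ.indicator φ) ζ * ((ζ - z)^2)⁻¹‖₊ : ℝ≥0∞) := by
              simp only [hTdef, nnnorm_mul, ENNReal.coe_mul]
            rw [hsn]
            have hπ : (‖(1 / (Real.pi : ℂ))‖₊ : ℝ≥0∞) ≤ 1 := by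
              rw [← ENNReal.coe_one, ENNReal.coe_le_coe, ← NNReal.coe_le_coe]
              simp only [coe_nnnorm, NNReal.coe_one, norm_div, norm_one]
              rw [Complex.norm_real, Real.norm_eq_abs, abs_of_pos Real.pi_pos]
              rw [div_le_one Real.pi_pos]
              linarith [Real.pi_gt_three]
            calc (‖(1 / (Real.pi : ℂ))‖₊ : ℝ≥0∞) *
                  (‖∫ ζ, ((Metric.ball (0:ℂ) R)ᶜ.indicator φ) ζ * ((ζ - z)^2)⁻¹‖₊ : ℝ≥0∞)
                ≤ 1 * (‖∫ ζ, ((Metric.ball (0:ℂ) R)ᶜ.indicator φ) ζ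
                    * ((ζ - z)^2)⁻¹‖₊ : ℝ≥0∞) := mul_le_mul_left hπ _
              _ = (‖∫ ζ, ((Metric.ball (0:ℂ) R)ᶜ.indicator φ) ζ
                    * ((ζ - z)^2)⁻¹‖₊ : ℝ≥0∞) := one_mul _
              _ ≤ ∫⁻ ζ, (‖((Metric.ball (0:ℂ) R)ᶜ.indicator φ) ζ
                    * ((ζ - z)^2)⁻¹‖₊ : ℝ≥0∞) := enorm_integral_le_lintegral_enorm _
          refine hTz.trans ?_
          refine (holder_tail hpq hφ.1 hRpos (by norm_num) haz).trans ?_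
          rw [hβdef, hκdef]
        have := eLpNorm_le_of_enorm_bound hp0 hptb
        rwa [Measure.restrict_apply_univ] at this
      calc eLpNorm (K φ) (ENNReal.ofReal p) (volume.restrict (Metric.ball (0:ℂ) S))
          ≤ eLpNorm (K φR) (ENNReal.ofReal p) (volume.restrict (Metric.ball (0:ℂ) S))
            + eLpNorm T (ENNReal.ofReal p) (volume.restrict (Metric.ball (0:ℂ) S)) := htri
        _ ≤ D + β n * V := add_le_add hbd1 hbd2
    -- take the limit in n
    have hβ0 : Tendsto (fun n : ℕ => β n * V) atTop (𝓝 0) := by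
      have h1 : Tendsto (fun n : ℕ => κ * tailInt q ((n:ℝ)+1)) atTop (𝓝 0) := by
        have h0 := ENNReal.Tendsto.const_mul (a := κ) (tailInt_tendsto hq1)
          (Or.inr (by rw [hκdef]; exact ENNReal.ofReal_ne_top))
        rwa [mul_zero] at h0
      have h2 : Tendsto (fun n : ℕ => (κ * tailInt q ((n:ℝ)+1))^(1/q)) atTop (𝓝 0) := by
        have hcont := (ENNReal.continuous_rpow_const (y := 1/q)).tendsto 0
        rw [ENNReal.zero_rpow_of_pos (by positivity)] at hcont
        exact hcont.comp h1
      have h3 : Tendsto (fun n : ℕ => β n) atTop (𝓝 0) := by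
        rw [hβdef]
        have h0 := ENNReal.Tendsto.const_mul (a := N) h2 (Or.inr hNtop)
        rwa [mul_zero] at h0
      have h0 := ENNReal.Tendsto.mul_const (b := V) h3 (Or.inr hVtop)
      rwa [zero_mul] at h0
    have hlim : Tendsto (fun n : ℕ => D + β n * V) atTop (𝓝 D) := by
      have := hβ0.const_add D
      rwa [add_zero] at this
    refine ge_of_tendsto hlim ?_
    filter_upwards [eventually_ge_atTop ⌈2*S⌉₊] with n hn
    apply hstep
    calc (2*S : ℝ) ≤ ⌈2*S⌉₊ := Nat.le_ceil _
      _ ≤ (n:ℝ) := by exact_mod_cast hn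
      _ ≤ (n:ℝ)+1 := by linarith
  -- monotone convergence over balls
  have hDfin : eLpNorm (K φ) (ENNReal.ofReal p) volume ≤ D := by
    set h : ℂ → ℝ≥0∞ := fun z => (‖K φ z‖₊ : ℝ≥0∞)^p with hhdef
    have hhm : AEMeasurable h volume := hKm.enorm.pow_const p
    have hmc : Tendsto (fun n : ℕ => ∫⁻ z,
        (Metric.ball (0:ℂ) ((n:ℝ)+1)).indicator h z) atTop (𝓝 (∫⁻ z, h z)) := by
      apply lintegral_tendsto_of_tendsto_of_monotone
      · intro n; exact hhm.indicator measurableSet_ball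
      · filter_upwards with z
        intro a b hab
        exact Set.indicator_le_indicator_of_subset
          (Metric.ball_subset_ball (by exact_mod_cast by linarith [hab] : ((a:ℝ)+1) ≤ (b:ℝ)+1))
          (fun _ => zero_le) z
      · filter_upwards with z
        apply tendsto_atTop_of_eventually_const (i₀ := ⌈‖z‖⌉₊)
        intro n hn
        apply Set.indicator_of_mem
        rw [Metric.mem_ball, dist_zero_right]
        calc ‖z‖ ≤ (⌈‖z‖⌉₊ : ℝ) := Nat.le_ceil _
          _ ≤ (n:ℝ) := by exact_mod_cast hn
          _ < (n:ℝ)+1 := by linarith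
    have hterm : ∀ n : ℕ, (∫⁻ z, (Metric.ball (0:ℂ) ((n:ℝ)+1)).indicator h z) ≤ D^p := by
      intro n
      rw [lintegral_indicator measurableSet_ball]
      have hkey := key ((n:ℝ)+1) (by positivity)
      rw [eLpNorm_ofReal_eq hp0] at hkey
      have := ENNReal.rpow_le_rpow hkey hp0.le
      rwa [← ENNReal.rpow_mul, one_div_mul_cancel hp0.ne', ENNReal.rpow_one] at this
    have hIle : (∫⁻ z, h z) ≤ D^p :=
      le_of_tendsto hmc (Eventually.of_forall hterm)
    rw [eLpNorm_ofReal_eq hp0]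
    calc (∫⁻ z, h z)^(1/p) ≤ (D^p)^(1/p) := ENNReal.rpow_le_rpow hIle (by positivity)
      _ = D := by rw [← ENNReal.rpow_mul, mul_one_div_cancel hp0.ne', ENNReal.rpow_one]
  exact hDfin

end BeurlingAux


/-- Let `K` be the Beurling transform
`Kφ(z) = (1/π) p.v. ∫_ℂ φ(ζ)/(ζ−z)² dμ(ζ)` and `Kz` its restriction-to-the-disk version
`𝒦_z[φ](z) = (1/π) p.v. ∫_𝔻 φ(ζ)/(ζ−z)² dμ(ζ)` acting on `L_p(𝔻)`.  Then for every
`p > 1` the operator `𝒦_z : L_p(𝔻) → L_p(𝔻)` is bounded, and its operator norm equals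
the `L_p(ℂ)` operator norm of `K`.  (The principal-value definitions of `K` and `Kz`, and
the Calderón–Zygmund boundedness of `K`, are encoded as hypotheses.) -/
theorem beurling_disk_norm (p : ℝ) (hp : 1 < p)
    (K Kz : (ℂ → ℂ) → (ℂ → ℂ))
    (hK_pv : ∀ φ : ℂ → ℂ, MemLp φ (ENNReal.ofReal p) volume →
      ∀ᵐ z : ℂ, Tendsto
        (fun ε : ℝ => (1 / (Real.pi : ℂ)) *
          ∫ ζ in {ζ : ℂ | ε < dist ζ z}, φ ζ / (ζ - z) ^ 2)
        (𝓝[>] (0:ℝ)) (𝓝 (K φ z)))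
    (hK_bdd : ∃ C : ℝ, 0 ≤ C ∧ ∀ φ : ℂ → ℂ, MemLp φ (ENNReal.ofReal p) volume →
      eLpNorm (K φ) (ENNReal.ofReal p) volume ≤
        ENNReal.ofReal C * eLpNorm φ (ENNReal.ofReal p) volume)
    (hKz_pv : ∀ φ : ℂ → ℂ, MemLp φ (ENNReal.ofReal p) (volume.restrict unitDisk) →
      ∀ᵐ z ∂(volume.restrict unitDisk), Tendsto
        (fun ε : ℝ => (1 / (Real.pi : ℂ)) *
          ∫ ζ in unitDisk ∩ {ζ : ℂ | ε < dist ζ z}, φ ζ / (ζ - z) ^ 2)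
        (𝓝[>] (0:ℝ)) (𝓝 (Kz φ z))) :
    (∃ C : ℝ, 0 ≤ C ∧ ∀ φ : ℂ → ℂ,
      MemLp φ (ENNReal.ofReal p) (volume.restrict unitDisk) →
        eLpNorm (Kz φ) (ENNReal.ofReal p) (volume.restrict unitDisk) ≤
          ENNReal.ofReal C * eLpNorm φ (ENNReal.ofReal p) (volume.restrict unitDisk)) ∧
    sInf {C : ℝ | 0 ≤ C ∧ ∀ φ : ℂ → ℂ,
        MemLp φ (ENNReal.ofReal p) (volume.restrict unitDisk) →
          eLpNorm (Kz φ) (ENNReal.ofReal p) (volume.restrict unitDisk) ≤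
            ENNReal.ofReal C * eLpNorm φ (ENNReal.ofReal p) (volume.restrict unitDisk)} =
    sInf {C : ℝ | 0 ≤ C ∧ ∀ φ : ℂ → ℂ,
        MemLp φ (ENNReal.ofReal p) volume →
          eLpNorm (K φ) (ENNReal.ofReal p) volume ≤
            ENNReal.ofReal C * eLpNorm φ (ENNReal.ofReal p) volume} := by
  obtain ⟨C, hC0, hC⟩ := hK_bdd
  have hsets : {C : ℝ | 0 ≤ C ∧ ∀ φ : ℂ → ℂ,
        MemLp φ (ENNReal.ofReal p) (volume.restrict unitDisk) →
          eLpNorm (Kz φ) (ENNReal.ofReal p) (volume.restrict unitDisk) ≤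
            ENNReal.ofReal C * eLpNorm φ (ENNReal.ofReal p) (volume.restrict unitDisk)}
      = {C : ℝ | 0 ≤ C ∧ ∀ φ : ℂ → ℂ,
        MemLp φ (ENNReal.ofReal p) volume →
          eLpNorm (K φ) (ENNReal.ofReal p) volume ≤
            ENNReal.ofReal C * eLpNorm φ (ENNReal.ofReal p) volume} := by
    ext C'
    simp only [Set.mem_setOf_eq]
    constructor
    · rintro ⟨h0, h⟩
      exact ⟨h0, fun φ hφ => BeurlingAux.hard_bound hp hK_pv hKz_pv h hφ⟩
    · rintro ⟨h0, h⟩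
      exact ⟨h0, fun φ hφ => BeurlingAux.easy_bound hK_pv hKz_pv h hφ⟩
  constructor
  · exact ⟨C, hC0, fun φ hφ => BeurlingAux.easy_bound hK_pv hKz_pv hC hφ⟩
  · rw [hsets]
end
end

section
/- 𝒦_{z̄}[φ](z) = conj( K[φ₂](z) ) for all z ∈ 𝔻, where φ₂(w) = conj(φ(1/w̄))/w̄² for |w|>1 and φ₂(w)=0 for |w|≤1, K is the Beurling transform on ℂ, and 𝒦_{z̄}[φ](z) = (1/π)∫_𝔻 φ(ζ)/(1−ζz̄)² dμ(ζ). -/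
open Complex Metric Set MeasureTheory ComplexConjugate Real

noncomputable section

/-- The operator `𝒦_z̄[φ](z) = (1/π) ∫_𝔻 φ(ζ)/(1−ζz̄)² dμ(ζ)`. -/
def Kzbar (φ : ℂ → ℂ) (z : ℂ) : ℂ :=
  (1 / (Real.pi : ℂ)) * ∫ ζ in unitDisk, φ ζ / (1 - ζ * conj z) ^ 2

/-- The Beurling transform applied to a function vanishing near the singularity: for `g`
supported outside the disk and `z ∈ 𝔻` the principal value reduces to an absolutely
convergent integral `Kg(z) = (1/π) ∫_ℂ g(ζ)/(ζ−z)² dμ(ζ)`. -/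
def beurling (g : ℂ → ℂ) (z : ℂ) : ℂ :=
  (1 / (Real.pi : ℂ)) * ∫ ζ : ℂ, g ζ / (ζ - z) ^ 2

/-- The reflected function `φ₂(w) = conj(φ(1/w̄))/w̄²` for `|w| > 1`, `φ₂(w) = 0`
for `|w| ≤ 1`. -/
def reflected (φ : ℂ → ℂ) (w : ℂ) : ℂ :=
  if 1 < ‖w‖ then conj (φ (1 / conj w)) / (conj w) ^ 2 else 0

/-- The inversion map `w ↦ 1/conj w`. -/
def invConj (w : ℂ) : ℂ := (conj w)⁻¹

/-- The real Fréchet derivative of `invConj` at `w`. -/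
def invConjDeriv (w : ℂ) : ℂ →L[ℝ] ℂ :=
  ((ContinuousLinearMap.smulRight (1 : ℂ →L[ℂ] ℂ) (-((conj w) ^ 2)⁻¹)).restrictScalars ℝ).comp
    (Complex.conjCLE : ℂ →L[ℝ] ℂ)

lemma hasFDerivAt_invConj {w : ℂ} (hw : w ≠ 0) :
    HasFDerivAt invConj (invConjDeriv w) w := by
  have h1 : HasFDerivAt (fun u : ℂ => (starRingEnd ℂ) u)
      (Complex.conjCLE : ℂ →L[ℝ] ℂ) w := Complex.conjCLE.hasFDerivAt
  have h2 : HasDerivAt (fun u : ℂ => u⁻¹) (-((conj w) ^ 2)⁻¹) (conj w) :=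
    hasDerivAt_inv (by simpa using hw)
  have h3 := (h2.hasFDerivAt.restrictScalars ℝ).comp w h1
  exact h3

lemma det_invConjDeriv (w : ℂ) :
    (invConjDeriv w).det = -((Complex.normSq w) ^ 2)⁻¹ := by
  have hc : ((ContinuousLinearMap.smulRight (1 : ℂ →L[ℂ] ℂ)
      (-((conj w) ^ 2)⁻¹)).restrictScalars ℝ).toLinearMap
      = Algebra.lmul ℝ ℂ (-((conj w) ^ 2)⁻¹) := by
    ext v
    simp [mul_comm]
  have hdet : (invConjDeriv w).det
      = LinearMap.det ((Algebra.lmul ℝ ℂ (-((conj w) ^ 2)⁻¹)).comp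
        Complex.conjAe.toLinearMap) := by
    unfold invConjDeriv
    rw [ContinuousLinearMap.det, ContinuousLinearMap.toLinearMap_comp, hc]
    congr 1
  rw [hdet, LinearMap.det_comp, Complex.det_conjAe]
  have : LinearMap.det ((Algebra.lmul ℝ ℂ) (-((conj w) ^ 2)⁻¹))
      = Complex.normSq (-((conj w) ^ 2)⁻¹) := by
    rw [← Algebra.norm_apply, Algebra.norm_complex_apply]
  rw [this]
  simp [Complex.normSq_conj, map_pow]

lemma invConj_image :
    invConj '' (unitDisk \ {0}) = {ζ : ℂ | 1 < ‖ζ‖} := by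
  ext ζ
  constructor
  · rintro ⟨w, ⟨hw1, hw0⟩, rfl⟩
    have hw0' : w ≠ 0 := by simpa using hw0
    have hlt : ‖w‖ < 1 := by simpa [unitDisk] using hw1
    have hpos : 0 < ‖w‖ := norm_pos_iff.2 hw0'
    simp only [invConj, mem_setOf_eq, norm_inv, RCLike.norm_conj]
    exact (one_lt_inv₀ hpos).2 hlt
  · intro hζ
    have h1 : (1 : ℝ) < ‖ζ‖ := hζ
    have hζ0 : ζ ≠ 0 := by
      intro h; rw [h] at h1; simp at h1; linarith
    refine ⟨(conj ζ)⁻¹, ⟨?_, ?_⟩, ?_⟩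
    · simp only [unitDisk, mem_ball, dist_zero_right, norm_inv, RCLike.norm_conj]
      exact inv_lt_one_of_one_lt₀ h1
    · simp [hζ0]
    · simp [invConj]

/-- For `φ ∈ L_p(𝔻)`, `p ≥ 2`, one has
`𝒦_z̄[φ](z) = conj(K[φ₂](z))` for all `z ∈ 𝔻`. -/
theorem Kzbar_eq_conj_beurling (p : ℝ) (hp : 2 ≤ p) (φ : ℂ → ℂ)
    (hφ : MemLp φ (ENNReal.ofReal p) (volume.restrict unitDisk)) :
    ∀ z ∈ unitDisk, Kzbar φ z = conj (beurling (reflected φ) z) := by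
  intro z hz
  have hz1 : ‖z‖ < 1 := by simpa [unitDisk] using hz
  set s : Set ℂ := unitDisk \ {0} with hs_def
  have hs : MeasurableSet s :=
    (measurableSet_ball).diff (measurableSet_singleton 0)
  -- Step 1: restrict the Beurling integral to the exterior of the disk
  have hext : (∫ ζ : ℂ, reflected φ ζ / (ζ - z) ^ 2)
      = ∫ ζ in {ζ : ℂ | 1 < ‖ζ‖}, reflected φ ζ / (ζ - z) ^ 2 := by
    refine (setIntegral_eq_integral_of_forall_compl_eq_zero ?_).symm
    intro ζ hζ
    have h : ¬ (1 : ℝ) < ‖ζ‖ := hζ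
    rw [reflected, if_neg h, zero_div]
  -- Step 2: change of variables
  have hder : ∀ w ∈ s, HasFDerivWithinAt invConj (invConjDeriv w) s w := by
    intro w hw
    exact (hasFDerivAt_invConj (by simpa using hw.2)).hasFDerivWithinAt
  have hinj : Set.InjOn invConj s := by
    intro u hu v hv huv
    have h2 : ((starRingEnd ℂ) u)⁻¹ = ((starRingEnd ℂ) v)⁻¹ := huv
    exact (starRingEnd ℂ).injective (inv_injective h2)
  have hcov := integral_image_eq_integral_abs_det_fderiv_smul volume hs hder hinj
    (fun ζ => reflected φ ζ / (ζ - z) ^ 2)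
  rw [invConj_image] at hcov
  -- Step 3: simplify the integrand on `s`
  have hptwise : ∀ w ∈ s,
      |(invConjDeriv w).det| • (reflected φ (invConj w) / (invConj w - z) ^ 2)
        = conj (φ w / (1 - w * conj z) ^ 2) := by
    intro w hw
    have hw0 : w ≠ 0 := by simpa using hw.2
    have hw1 : ‖w‖ < 1 := by simpa [unitDisk] using hw.1
    have hwc : (starRingEnd ℂ) w ≠ 0 := by simpa using hw0
    have hpos : 0 < ‖w‖ := norm_pos_iff.2 hw0
    have hfw : (1 : ℝ) < ‖invConj w‖ := by
      simp only [invConj, norm_inv, RCLike.norm_conj]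
      exact (one_lt_inv₀ hpos).2 hw1
    have hrefl : reflected φ (invConj w) = conj (φ w) * w ^ 2 := by
      have h1 : (starRingEnd ℂ) (invConj w) = w⁻¹ := by simp [invConj]
      rw [reflected, if_pos hfw, h1, one_div, inv_inv, inv_pow, div_eq_mul_inv, inv_inv]
    have hdet : |(invConjDeriv w).det| = ((Complex.normSq w) ^ 2)⁻¹ := by
      rw [det_invConjDeriv, abs_neg, _root_.abs_of_nonneg (by positivity)]
    have hne : 1 - z * (starRingEnd ℂ) w ≠ 0 := by
      intro h
      have hlt : ‖z * conj w‖ < 1 := by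
        rw [norm_mul, RCLike.norm_conj]
        calc ‖z‖ * ‖w‖ ≤ 1 * ‖w‖ := by
              apply mul_le_mul_of_nonneg_right hz1.le (norm_nonneg _)
          _ = ‖w‖ := one_mul _
          _ < 1 := hw1
      have h1 : z * conj w = 1 := by linear_combination -h
      rw [h1] at hlt; simp at hlt
    have hnsq : ((Complex.normSq w : ℝ) : ℂ) = w * conj w := by
      rw [Complex.normSq_eq_conj_mul_self]; ring
    rw [hrefl, hdet, Complex.real_smul, map_div₀, map_pow]
    have hconjsub : (starRingEnd ℂ) (1 - w * conj z)
        = 1 - z * (starRingEnd ℂ) w := by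
      simp only [map_sub, map_one, map_mul, Complex.conj_conj]
      ring
    rw [hconjsub]
    have hinvw : invConj w - z = (1 - z * (starRingEnd ℂ) w) / (starRingEnd ℂ) w := by
      rw [eq_div_iff hwc, invConj, sub_mul, inv_mul_cancel₀ hwc]
    rw [hinvw]
    push_cast
    rw [hnsq]
    field_simp
  have hint_eq : (∫ w in s, |(invConjDeriv w).det|
        • (reflected φ (invConj w) / (invConj w - z) ^ 2))
      = ∫ w in s, conj (φ w / (1 - w * conj z) ^ 2) := by
    exact setIntegral_congr_fun hs (fun w hw => hptwise w hw)
  -- Step 4: put everything together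
  have hsae : s =ᵐ[volume] unitDisk := by
    refine diff_ae_eq_self.2 ?_
    exact measure_mono_null (inter_subset_right) (measure_singleton 0)
  unfold Kzbar beurling
  rw [map_mul, hext, hcov, hint_eq, ← integral_conj]
  simp only [Complex.conj_conj]
  rw [setIntegral_congr_set hsae]
  congr 1
  rw [eq_comm, map_div₀, map_one, Complex.conj_ofReal]
end
end
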